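/- arXiv:math/9808130 — 5 statements merged into one kernel-verified Lean document; each statement's English description precedes it below -/
import Mathlib

section
/- Let P, Q be modules over a commutative unital 𝕜-algebra A and k ≥ 0. For Δ ∈ Diff_k⁺(P,Q) and p ∈ P define ψ_Δ(p) : A → Q by ψ_Δ(p)(a) = Δ(a·p). Then ψ_Δ(p) ∈ Diff_k⁺(Q) for every p ∈ P, the map ψ_Δ : P → Diff_k⁺(Q) is A-linear, and the map ψ : Diff_k⁺(P,Q) → Hom_A(P, Diff_k⁺(Q)), Δ ↦ ψ_Δ, is an isomorphism of A-modules whose inverse sends φ ∈ Hom_A(P, Diff_k⁺(Q)) to the operator p ↦ (φ(p))(1). -/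
/-- `dop A a f = δ_a(f)`, where `δ_a(f)(p) = f (a • p) - a • f p`. -/
def dop (A : Type*) [CommRing A] {M N : Type*} [AddCommGroup M] [Module A M]
    [AddCommGroup N] [Module A N] (a : A) (f : M → N) : M → N :=
  fun p => f (a • p) - a • f p

/-- `IsDiffOp A k f` : `f` is a differential operator of order at most `k` over `A`. -/
def IsDiffOp (A : Type*) [CommRing A] {M N : Type*} [AddCommGroup M] [Module A M]
    [AddCommGroup N] [Module A N] : ℕ → (M → N) → Prop
  | 0, f => ∀ a : A, dop A a f = 0
  | k + 1, f => ∀ a : A, IsDiffOp A k (dop A a f)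

section
variable (𝕜 : Type*) [Field 𝕜] (A : Type*) [CommRing A] [Algebra 𝕜 A]
variable {P Q : Type*}
  [AddCommGroup P] [Module 𝕜 P] [Module A P] [IsScalarTower 𝕜 A P]
  [AddCommGroup Q] [Module 𝕜 Q] [Module A Q] [IsScalarTower 𝕜 A Q]

/-- `psi Δ p : A →ₗ[𝕜] Q`, `a ↦ Δ (a • p)`:  the `Diff`-associated homomorphism `ψ_Δ`. -/
def psi (Δ : P →ₗ[𝕜] Q) (p : P) : A →ₗ[𝕜] Q where
  toFun a := Δ (a • p)
  map_add' a b := by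
    show Δ ((a + b) • p) = Δ (a • p) + Δ (b • p)
    rw [add_smul, map_add]
  map_smul' c a := by
    show Δ ((c • a) • p) = c • Δ (a • p)
    rw [smul_assoc, map_smul]

/-- The `+`-action of `A` on `𝕜`-linear maps `P → Q`: `(a⁺Δ)(p) = Δ (a • p)`. -/
def plusAct (a : A) (Δ : P →ₗ[𝕜] Q) : P →ₗ[𝕜] Q where
  toFun p := Δ (a • p)
  map_add' p p' := by
    show Δ (a • (p + p')) = Δ (a • p) + Δ (a • p')
    rw [smul_add, map_add]
  map_smul' c p := by
    show Δ (a • c • p) = c • Δ (a • p)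
    rw [(smul_comm c a p).symm, map_smul]

end


section Aux
variable {A : Type*} [CommRing A] {P Q : Type*}
  [AddCommGroup P] [Module A P] [AddCommGroup Q] [Module A Q]

theorem dop_smulright (a : A) (g : P → Q) (p : P) :
    dop A a (fun b : A => g (b • p)) = fun b : A => (dop A a g) (b • p) := by
  funext b
  simp [dop, smul_eq_mul, mul_smul]

theorem isDiffOp_smulright : ∀ (k : ℕ) (g : P → Q), IsDiffOp A k g →
    ∀ p : P, IsDiffOp A k (fun b : A => g (b • p))
  | 0, g, hg, p => by
    intro a
    rw [dop_smulright, hg a]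
    rfl
  | k + 1, g, hg, p => by
    intro a
    rw [dop_smulright]
    exact isDiffOp_smulright k _ (hg a) p

theorem isDiffOp_eval_one : ∀ (k : ℕ) (θ : P → A → Q),
    (∀ (a : A) (p : P) (b : A), θ (a • p) b = θ p (a * b)) →
    (∀ p : P, IsDiffOp A k (θ p)) → IsDiffOp A k (fun p : P => θ p 1)
  | 0, θ, hcomp, hθ => by
    intro a
    funext p
    have h0 := congrFun (hθ p a) 1
    simp only [dop, smul_eq_mul, mul_one, Pi.zero_apply] at h0 ⊢
    rw [hcomp a p 1, mul_one]
    exact h0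
  | k + 1, θ, hcomp, hθ => by
    intro a
    have heq : dop A a (fun p : P => θ p 1) = fun p : P => (dop A a (θ p)) 1 := by
      funext p
      simp only [dop, smul_eq_mul, mul_one]
      rw [hcomp a p 1, mul_one]
    rw [heq]
    exact isDiffOp_eval_one k (fun p => dop A a (θ p))
      (by
        intro c p b
        simp only [dop, smul_eq_mul]
        rw [hcomp c p (a * b), hcomp c p b]
        ring_nf)
      (fun p => hθ p a)

end Aux

/-- For `Δ ∈ Diff_k⁺(P,Q)` set `ψ_Δ(p)(a) = Δ(a • p)`.  Then
`ψ_Δ(p) ∈ Diff_k⁺(Q)`, the map `ψ_Δ : P → Diff_k⁺(Q)` is `A`-linear (for the `+`-module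
structure on `Diff_k⁺(Q)`, `(a⁺θ)(b) = θ(a b)`), and `Δ ↦ ψ_Δ` is an isomorphism of
`A`-modules `Diff_k⁺(P,Q) ≃ Hom_A(P, Diff_k⁺(Q))` (for the `+`-structures) whose inverse
sends `φ` to `p ↦ φ(p)(1)`. -/
theorem diff_plus_representability
    (𝕜 : Type*) [Field 𝕜] (A : Type*) [CommRing A] [Algebra 𝕜 A]
    (P Q : Type*)
    [AddCommGroup P] [Module 𝕜 P] [Module A P] [IsScalarTower 𝕜 A P]
    [AddCommGroup Q] [Module 𝕜 Q] [Module A Q] [IsScalarTower 𝕜 A Q]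
    (k : ℕ) :
    -- ψ_Δ takes values in Diff_k⁺(Q)
    (∀ Δ : P →ₗ[𝕜] Q, IsDiffOp A k ⇑Δ → ∀ p : P, IsDiffOp A k ⇑(psi 𝕜 A Δ p)) ∧
    -- ψ_Δ : P → Diff_k⁺(Q) is A-linear (w.r.t. the `+`-module structure on the target)
    (∀ Δ : P →ₗ[𝕜] Q, IsDiffOp A k ⇑Δ →
      (∀ p p' : P, psi 𝕜 A Δ (p + p') = psi 𝕜 A Δ p + psi 𝕜 A Δ p') ∧
      (∀ (a : A) (p : P) (b : A), psi 𝕜 A Δ (a • p) b = psi 𝕜 A Δ p (a * b))) ∧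
    -- ψ is additive and A-homogeneous (for the `+`-actions), i.e. a map of A-modules
    (∀ Δ Δ' : P →ₗ[𝕜] Q, IsDiffOp A k ⇑Δ → IsDiffOp A k ⇑Δ' →
      psi 𝕜 A (Δ + Δ') = psi 𝕜 A Δ + psi 𝕜 A Δ') ∧
    (∀ (a : A) (Δ : P →ₗ[𝕜] Q), IsDiffOp A k ⇑Δ →
      ∀ (p : P) (b : A), psi 𝕜 A (plusAct 𝕜 A a Δ) p b = psi 𝕜 A Δ p (a * b)) ∧
    -- the inverse sends φ to p ↦ φ(p)(1)
    (∀ (Δ : P →ₗ[𝕜] Q) (p : P), psi 𝕜 A Δ p 1 = Δ p) ∧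
    -- ψ is injective …
    (∀ Δ Δ' : P →ₗ[𝕜] Q, IsDiffOp A k ⇑Δ → IsDiffOp A k ⇑Δ' →
      psi 𝕜 A Δ = psi 𝕜 A Δ' → Δ = Δ') ∧
    -- … and surjective onto Hom_A(P, Diff_k⁺(Q))
    (∀ φ : P → (A →ₗ[𝕜] Q),
      (∀ p p' : P, φ (p + p') = φ p + φ p') →
      (∀ (a : A) (p : P) (b : A), φ (a • p) b = φ p (a * b)) →
      (∀ p : P, IsDiffOp A k ⇑(φ p)) →
      ∃ Δ : P →ₗ[𝕜] Q, IsDiffOp A k ⇑Δ ∧ (∀ p : P, Δ p = φ p 1) ∧ psi 𝕜 A Δ = φ) := by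
  refine ⟨?_, ?_, ?_, ?_, ?_, ?_, ?_⟩
  · intro Δ hΔ p
    exact isDiffOp_smulright k ⇑Δ hΔ p
  · intro Δ _
    constructor
    · intro p p'
      ext b
      show Δ (b • (p + p')) = Δ (b • p) + Δ (b • p')
      rw [smul_add, map_add]
    · intro a p b
      show Δ (b • a • p) = Δ ((a * b) • p)
      rw [smul_smul, mul_comm]
  · intro Δ Δ' _ _
    funext p
    ext b
    show (Δ + Δ') (b • p) = Δ (b • p) + Δ' (b • p)
    rfl
  · intro a Δ _ p b
    show Δ (a • b • p) = Δ ((a * b) • p)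
    rw [smul_smul]
  · intro Δ p
    show Δ ((1 : A) • p) = Δ p
    rw [one_smul]
  · intro Δ Δ' _ _ h
    ext p
    have := congrArg (fun f => (f p) (1 : A)) h
    simpa [psi] using this
  · intro φ hadd hcomp hdiff
    have hs : ∀ (c : 𝕜) (p : P), φ (c • p) 1 = c • φ p 1 := by
      intro c p
      have h1 : c • p = (c • (1 : A)) • p := by rw [smul_assoc, one_smul]
      rw [h1, show φ ((c • (1 : A)) • p) 1 = φ p ((c • (1 : A)) * 1) from hcomp _ p 1,
        mul_one, map_smul]
    refine ⟨⟨⟨fun p => φ p 1, fun p p' => by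
        show φ (p + p') 1 = φ p 1 + φ p' 1
        rw [hadd p p']; rfl⟩,
      fun c p => hs c p⟩, ?_, fun p => rfl, ?_⟩
    · exact isDiffOp_eval_one k (fun p => ⇑(φ p)) hcomp hdiff
    · funext p
      ext b
      show φ (b • p) 1 = φ p b
      rw [hcomp b p 1, mul_one]
end

section
/- Let P be a module over a commutative unital 𝕜-algebra A and k, l ≥ 0. Let Δ : A → Diff_l⁺(P) be a differential operator of order ≤ k over A with values in the A-module Diff_l⁺(P). Then the map c_{k,l}(Δ) : A → P defined by c_{k,l}(Δ)(a) = (Δ(a))(1) is a differential operator of order ≤ k + l over A, and the resulting gluing map c_{k,l} : Diff_k⁺(Diff_l⁺(P)) → Diff_{k+l}⁺(P) is a homomorphism of A-modules. -/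
/-- The `𝕜`-linear maps `A → P`, regarded as an `A`-module via the action
`(a • θ) b = θ (a * b)`:  this is the carrier of the modules `Diff_l⁺(P)` with the
`+`-module structure. -/
def PlusHom (𝕜 : Type*) [Field 𝕜] (A : Type*) [CommRing A] [Algebra 𝕜 A]
    (P : Type*) [AddCommGroup P] [Module 𝕜 P] : Type _ :=
  A →ₗ[𝕜] P

namespace PlusHom

variable {𝕜 : Type*} [Field 𝕜] {A : Type*} [CommRing A] [Algebra 𝕜 A]
variable {P : Type*} [AddCommGroup P] [Module 𝕜 P]

instance : FunLike (PlusHom 𝕜 A P) A P :=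
  inferInstanceAs (FunLike (A →ₗ[𝕜] P) A P)

instance : AddCommGroup (PlusHom 𝕜 A P) :=
  inferInstanceAs (AddCommGroup (A →ₗ[𝕜] P))

instance : Module 𝕜 (PlusHom 𝕜 A P) :=
  inferInstanceAs (Module 𝕜 (A →ₗ[𝕜] P))

instance : LinearMapClass (PlusHom 𝕜 A P) 𝕜 A P :=
  inferInstanceAs (LinearMapClass (A →ₗ[𝕜] P) 𝕜 A P)

/-- Regard a `𝕜`-linear map as an element of `PlusHom`. -/
def of (θ : A →ₗ[𝕜] P) : PlusHom 𝕜 A P := θ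

/-- The underlying `𝕜`-linear map. -/
def toLin (θ : PlusHom 𝕜 A P) : A →ₗ[𝕜] P := θ

instance : SMul A (PlusHom 𝕜 A P) :=
  ⟨fun a θ => of (toLin θ ∘ₗ LinearMap.mulLeft 𝕜 a)⟩

lemma ext {θ η : PlusHom 𝕜 A P} (h : ∀ b : A, θ b = η b) : θ = η :=
  LinearMap.ext h

@[simp] lemma smul_apply (a : A) (θ : PlusHom 𝕜 A P) (b : A) :
    (a • θ) b = θ (a * b) := rfl

@[simp] lemma add_apply (θ η : PlusHom 𝕜 A P) (b : A) : (θ + η) b = θ b + η b := rfl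

@[simp] lemma ksmul_apply (c : 𝕜) (θ : PlusHom 𝕜 A P) (b : A) :
    (c • θ) b = c • θ b := rfl

@[simp] lemma zero_apply (b : A) : (0 : PlusHom 𝕜 A P) b = 0 := rfl

instance : Module A (PlusHom 𝕜 A P) where
  smul := (· • ·)
  one_smul θ := ext fun b => congrArg θ (one_mul b)
  mul_smul a a' θ := ext fun b => congrArg θ (show (a * a') * b = a' * (a * b) by ring)
  smul_zero a := ext fun _ => rfl
  smul_add a θ η := ext fun _ => rfl
  add_smul a a' θ := ext fun b => by
    show θ ((a + a') * b) = θ (a * b) + θ (a' * b)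
    rw [add_mul]; exact map_add θ _ _
  zero_smul θ := ext fun b => by
    show θ (0 * b) = 0
    rw [zero_mul]; exact map_zero θ

instance : IsScalarTower 𝕜 A (PlusHom 𝕜 A P) :=
  ⟨fun c a θ => ext fun b => by
    show θ ((c • a) * b) = c • θ (a * b)
    rw [smul_mul_assoc, map_smul]⟩

end PlusHom

section
variable (𝕜 : Type*) [Field 𝕜] (A : Type*) [CommRing A] [Algebra 𝕜 A]
variable {P : Type*} [AddCommGroup P] [Module 𝕜 P]

/-- The gluing map `c_{k,l}` : it sends `Δ : A → Diff⁺(P)` to the operator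
`a ↦ (Δ a)(1)`. -/
def glue (Δ : PlusHom 𝕜 A (PlusHom 𝕜 A P)) : PlusHom 𝕜 A P :=
  PlusHom.of
    { toFun := fun a => Δ a 1
      map_add' := fun a b => by
        show Δ (a + b) 1 = Δ a 1 + Δ b 1
        rw [map_add]; rfl
      map_smul' := fun c a => by
        show Δ (c • a) 1 = c • Δ a 1
        rw [map_smul]; rfl }

end


section MyAux

variable {A : Type*} [CommRing A] {M N : Type*} [AddCommGroup M] [Module A M]
  [AddCommGroup N] [Module A N]

lemma myDop_zero (a : A) : dop A a (fun _ : M => (0 : N)) = fun _ => 0 := by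
  funext p; simp [dop]

lemma myIsDiffOp_zero (n : ℕ) : IsDiffOp A n (fun _ : M => (0 : N)) := by
  induction n with
  | zero => intro a; exact myDop_zero a
  | succ n ih => intro a; rw [myDop_zero a]; exact ih

lemma myDop_add (a : A) (f g : M → N) :
    dop A a (fun p => f p + g p) = fun p => dop A a f p + dop A a g p := by
  funext p; simp [dop, smul_add]; abel

lemma myIsDiffOp_add (n : ℕ) {f g : M → N} (hf : IsDiffOp A n f) (hg : IsDiffOp A n g) :
    IsDiffOp A n (fun p => f p + g p) := by
  induction n generalizing f g with
  | zero =>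
    intro a; rw [myDop_add]
    funext p
    have h1 := congrFun (hf a) p
    have h2 := congrFun (hg a) p
    simp only [Pi.zero_apply] at h1 h2 ⊢
    rw [h1, h2, add_zero]
  | succ n ih =>
    intro a; rw [myDop_add]; exact ih (hf a) (hg a)

lemma myDop_sub (a : A) (f g : M → N) :
    dop A a (fun p => f p - g p) = fun p => dop A a f p - dop A a g p := by
  funext p; simp [dop, smul_sub]; abel

lemma myIsDiffOp_sub (n : ℕ) {f g : M → N} (hf : IsDiffOp A n f) (hg : IsDiffOp A n g) :
    IsDiffOp A n (fun p => f p - g p) := by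
  induction n generalizing f g with
  | zero =>
    intro a; rw [myDop_sub]
    funext p
    have h1 := congrFun (hf a) p
    have h2 := congrFun (hg a) p
    simp only [Pi.zero_apply] at h1 h2 ⊢
    rw [h1, h2, sub_zero]
  | succ n ih =>
    intro a; rw [myDop_sub]; exact ih (hf a) (hg a)

lemma myDop_precomp (a c : A) (f : A → N) :
    dop A c (fun x => f (a * x)) = fun x => dop A c f (a * x) := by
  funext x
  simp only [dop, smul_eq_mul]
  ring_nf

lemma myIsDiffOp_precomp (n : ℕ) (a : A) {f : A → N} (hf : IsDiffOp A n f) :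
    IsDiffOp A n (fun x => f (a * x)) := by
  induction n generalizing f with
  | zero =>
    intro c; rw [myDop_precomp]
    funext x
    have := congrFun (hf c) (a * x)
    simpa using this
  | succ n ih =>
    intro c; rw [myDop_precomp]; exact ih (hf c)

end MyAux

section MyAux2

variable {𝕜 : Type*} [Field 𝕜] {A : Type*} [CommRing A] [Algebra 𝕜 A]
variable {P : Type*} [AddCommGroup P] [Module 𝕜 P] [Module A P] [IsScalarTower 𝕜 A P]

/-- The operator `δ_a` on `PlusHom`s. -/
def myDopTheta (a : A) (θ : PlusHom 𝕜 A P) : PlusHom 𝕜 A P :=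
  PlusHom.of
    { toFun := fun x => θ (a * x) - a • θ x
      map_add' := fun x y => by
        simp only [mul_add, map_add, smul_add]; abel
      map_smul' := fun c x => by
        simp only [RingHom.id_apply]
        rw [mul_smul_comm, map_smul, map_smul, smul_comm a c, smul_sub]
      }

@[simp] lemma myDopTheta_apply (a : A) (θ : PlusHom 𝕜 A P) (x : A) :
    myDopTheta a θ x = θ (a * x) - a • θ x := rfl

lemma myDopTheta_coe (a : A) (θ : PlusHom 𝕜 A P) :
    ⇑(myDopTheta a θ) = dop A a ⇑θ := by
  funext x; simp [dop, smul_eq_mul]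

@[simp] lemma myPlusHom_sub_apply (θ η : PlusHom 𝕜 A P) (b : A) :
    (θ - η) b = θ b - η b := rfl

lemma myDopTheta_zero (a : A) : myDopTheta a (0 : PlusHom 𝕜 A P) = 0 :=
  PlusHom.ext fun x => by simp

lemma myDop_coe (a : A) (f : A → PlusHom 𝕜 A P) (b x : A) :
    (dop A a f b) x = f (a * b) x - f b (a * x) := by
  simp [dop, smul_eq_mul]

/-- Key identity: `δ_a (glue f) = glue (δ_a f) + glue (δ_a ∘ f)`. -/
lemma myDop_glueF (a : A) (f : A → PlusHom 𝕜 A P) :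
    dop A a (fun b => f b 1) =
      fun b => (dop A a f b) 1 + (myDopTheta a (f b)) 1 := by
  funext b
  show f (a • b) 1 - a • f b 1 = (dop A a f b) 1 + (myDopTheta a (f b)) 1
  rw [myDop_coe a f b 1, myDopTheta_apply, smul_eq_mul, mul_one]
  abel

lemma myDop_dopTheta_comm (a c : A) (f : A → PlusHom 𝕜 A P) :
    dop A c (fun b => myDopTheta a (f b)) = fun b => myDopTheta a (dop A c f b) := by
  funext b
  apply PlusHom.ext
  intro x
  simp only [dop, smul_eq_mul, myPlusHom_sub_apply, PlusHom.smul_apply,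
    myDopTheta_apply, smul_sub]
  rw [mul_left_comm a c x]
  abel

lemma myDopTheta_isDiffOp (k : ℕ) (a : A) {f : A → PlusHom 𝕜 A P}
    (hf : IsDiffOp A k f) : IsDiffOp A k (fun b => myDopTheta a (f b)) := by
  induction k generalizing f with
  | zero =>
    intro c
    rw [myDop_dopTheta_comm]
    funext b
    rw [congrFun (hf c) b]
    show myDopTheta a (0 : PlusHom 𝕜 A P) = 0
    exact myDopTheta_zero a
  | succ k ih =>
    intro c
    rw [myDop_dopTheta_comm]
    exact ih (hf c)

lemma myGlueF_isDiffOp : ∀ (n k l : ℕ) (f : A → PlusHom 𝕜 A P), k + l = n →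
    IsDiffOp A k f → (∀ b : A, IsDiffOp A l ⇑(f b)) →
    IsDiffOp A n (fun b => f b 1) := by
  intro n
  induction n with
  | zero =>
    intro k l f hkl hk hl
    obtain ⟨rfl, rfl⟩ : k = 0 ∧ l = 0 := by omega
    intro a
    funext b
    have h1 : f (a * b) = a • f b := by
      have := congrFun (hk a) b
      simp only [Pi.zero_apply] at this
      have h := sub_eq_zero.mp (by simpa [dop, smul_eq_mul] using this)
      exact h
    have h2 : f b a = a • f b 1 := by
      have := congrFun (hl b a) 1
      simp only [Pi.zero_apply, dop, smul_eq_mul, mul_one] at this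
      exact sub_eq_zero.mp this
    show f (a • b) 1 - a • f b 1 = 0
    rw [smul_eq_mul, h1]
    show f b (a * 1) - a • f b 1 = 0
    rw [mul_one, h2, sub_self]
  | succ n ih =>
    intro k l f hkl hk hl
    intro a
    rw [myDop_glueF]
    apply myIsDiffOp_add
    · -- glue (δ_a f)
      match k, hk with
      | 0, hk =>
        have : (fun b => (dop A a f b) 1) = fun _ : A => (0 : P) := by
          funext b
          rw [congrFun (hk a) b]
          rfl
        rw [this]
        exact myIsDiffOp_zero n
      | k' + 1, hk =>
        refine ih k' l (dop A a f) (by omega) (hk a) ?_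
        intro b
        have hco : ⇑(dop A a f b) = fun x => f (a * b) x - (f b) (a * x) := by
          funext x; exact myDop_coe a f b x
        rw [hco]
        exact myIsDiffOp_sub l (hl (a * b)) (myIsDiffOp_precomp l a (hl b))
    · -- glue (δ_a ∘ f)
      match l, hl with
      | 0, hl =>
        have : (fun b => (myDopTheta a (f b)) 1) = fun _ : A => (0 : P) := by
          funext b
          have := congrFun (hl b a) 1
          simpa [dop, smul_eq_mul, mul_one] using this
        rw [this]
        exact myIsDiffOp_zero n
      | l' + 1, hl =>
        refine ih k l' (fun b => myDopTheta a (f b)) (by omega)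
          (myDopTheta_isDiffOp k a hk) ?_
        intro b
        rw [myDopTheta_coe]
        exact hl b a

end MyAux2

/-- If `Δ : A → Diff_l⁺(P)` is a differential operator of order `≤ k`
over `A` with values in the `A`-module `Diff_l⁺(P)` (with the `+`-structure
`(a • θ) b = θ (a b)`), then `c_{k,l}(Δ) : a ↦ (Δ a)(1)` is a differential operator of
order `≤ k + l` over `A`, and the gluing map `c_{k,l}` is a homomorphism of `A`-modules
(for the `+`-structures on both operator modules). -/
theorem glue_isDiffOp_and_linear
    (𝕜 : Type*) [Field 𝕜] (A : Type*) [CommRing A] [Algebra 𝕜 A]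
    (P : Type*) [AddCommGroup P] [Module 𝕜 P] [Module A P] [IsScalarTower 𝕜 A P]
    (k l : ℕ) :
    (∀ Δ : PlusHom 𝕜 A (PlusHom 𝕜 A P), ∀ b : A, glue 𝕜 A Δ b = Δ b 1) ∧
    (∀ Δ : PlusHom 𝕜 A (PlusHom 𝕜 A P),
      IsDiffOp A k ⇑Δ → (∀ a : A, IsDiffOp A l ⇑(Δ a)) →
        IsDiffOp A (k + l) ⇑(glue 𝕜 A Δ)) ∧
    (∀ Δ Δ' : PlusHom 𝕜 A (PlusHom 𝕜 A P),
      IsDiffOp A k ⇑Δ → (∀ a : A, IsDiffOp A l ⇑(Δ a)) →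
      IsDiffOp A k ⇑Δ' → (∀ a : A, IsDiffOp A l ⇑(Δ' a)) →
        glue 𝕜 A (Δ + Δ') = glue 𝕜 A Δ + glue 𝕜 A Δ') ∧
    (∀ (a : A) (Δ : PlusHom 𝕜 A (PlusHom 𝕜 A P)),
      IsDiffOp A k ⇑Δ → (∀ b : A, IsDiffOp A l ⇑(Δ b)) →
        glue 𝕜 A (a • Δ) = a • glue 𝕜 A Δ) := by
  refine ⟨fun Δ b => rfl, ?_, ?_, ?_⟩
  · intro Δ hk hl
    have h := myGlueF_isDiffOp (k + l) k l ⇑Δ rfl hk hl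
    exact h
  · intro Δ Δ' _ _ _ _
    exact PlusHom.ext fun b => rfl
  · intro a Δ _ _
    exact PlusHom.ext fun b => rfl
end

section
/- Let 𝕜 be a field of characteristic zero and A a commutative unital 𝕜-algebra whose module of Kähler differentials Ω_{A/𝕜} is finitely generated and projective (A is smooth), and let P be an A-module. For Δ ∈ Diff_k(A,P) define s_Δ : A^k → P by s_Δ(a₁,…,a_k) = (δ_{a₁}(δ_{a₂}(⋯δ_{a_k}(Δ)⋯)))(1). Then s_Δ is a symmetric k-multiderivation of A with values in P, the map Δ ↦ s_Δ is A-linear with kernel exactly Diff_{k−1}(A,P), and it maps Diff_k(A,P) surjectively onto the A-module of symmetric k-multiderivations of A with values in P. Hence the module of symbols Smbl_k(A,P) := Diff_k(A,P)/Diff_{k−1}(A,P) is isomorphic to the module of symmetric k-multiderivations of A with values in P. -/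
/-- The symbol of a differential operator:
`s_Δ(a₁,…,a_k) = (δ_{a₁}(δ_{a₂}(⋯ δ_{a_k}(Δ) ⋯)))(1)`. -/
def symbolMap (A : Type*) [CommRing A] {P : Type*} [AddCommGroup P] [Module A P]
    (k : ℕ) (Δ : A → P) : (Fin k → A) → P :=
  fun v => ((List.ofFn v).foldr (dop A) Δ) 1

/-- Symmetric `k`-multiderivations of `A` with values in `P` : `𝕜`-multilinear maps,
invariant under all permutations of the arguments, satisfying the Leibniz rule in
each argument. -/
def IsSymMultiDeriv (𝕜 : Type*) [Field 𝕜] (A : Type*) [CommRing A] [Algebra 𝕜 A]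
    {P : Type*} [AddCommGroup P] [Module 𝕜 P] [Module A P] (k : ℕ)
    (s : (Fin k → A) → P) : Prop :=
  (∀ (v : Fin k → A) (i : Fin k) (x y : A),
      s (Function.update v i (x + y)) = s (Function.update v i x) + s (Function.update v i y)) ∧
  (∀ (v : Fin k → A) (i : Fin k) (c : 𝕜) (x : A),
      s (Function.update v i (c • x)) = c • s (Function.update v i x)) ∧
  (∀ (v : Fin k → A) (e : Equiv.Perm (Fin k)), s (v ∘ e) = s v) ∧
  (∀ (v : Fin k → A) (i : Fin k) (x y : A),
      s (Function.update v i (x * y)) =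
        x • s (Function.update v i y) + y • s (Function.update v i x))

section Basic
variable {A : Type*} [CommRing A] {M N : Type*} [AddCommGroup M] [Module A M]
  [AddCommGroup N] [Module A N]

theorem dop_comm (a b : A) (f : M → N) : dop A a (dop A b f) = dop A b (dop A a f) := by
  funext p
  simp only [dop, smul_sub, smul_smul, mul_comm]
  abel

theorem dop_add (a : A) (f g : M → N) : dop A a (f + g) = dop A a f + dop A a g := by
  funext p
  simp only [dop, Pi.add_apply, smul_add]
  abel

theorem dop_zero (a : A) : dop A a (0 : M → N) = 0 := by
  funext p; simp [dop]

/-- `dop a` as an additive monoid hom. -/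
def dopHom (a : A) : (M → N) →+ (M → N) :=
  { toFun := dop A a, map_zero' := dop_zero a, map_add' := dop_add a }

theorem dop_sum (a : A) {ι : Type*} (s : Finset ι) (f : ι → (M → N)) :
    dop A a (∑ i ∈ s, f i) = ∑ i ∈ s, dop A a (f i) :=
  map_sum (dopHom a) f s

theorem dop_smulA (a c : A) (f : M → N) : dop A a (c • f) = c • dop A a f := by
  funext p
  simp only [dop, Pi.smul_apply, smul_sub, smul_smul, mul_comm]

instance dop_leftComm : LeftCommutative (dop A (M := M) (N := N)) :=
  ⟨fun a b f => dop_comm a b f⟩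

theorem dop_addpres (a : A) (f : M → N) (hf : ∀ x y, f (x + y) = f x + f y) :
    ∀ x y, dop A a f (x + y) = dop A a f x + dop A a f y := by
  intro x y
  simp only [dop, smul_add, hf]
  abel

theorem foldr_dop_add (l : List A) (f g : M → N) :
    l.foldr (dop A) (f + g) = l.foldr (dop A) f + l.foldr (dop A) g := by
  induction l with
  | nil => rfl
  | cons a t ih => simp [List.foldr_cons, ih, dop_add]

theorem foldr_dop_zero (l : List A) : l.foldr (dop A) (0 : M → N) = 0 := by
  induction l with
  | nil => rfl
  | cons a t ih => simp [List.foldr_cons, ih, dop_zero]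

theorem foldr_dop_sum (l : List A) {ι : Type*} (s : Finset ι) (f : ι → (M → N)) :
    l.foldr (dop A) (∑ i ∈ s, f i) = ∑ i ∈ s, l.foldr (dop A) (f i) := by
  induction l with
  | nil => rfl
  | cons a t ih => simp [List.foldr_cons, ih, dop_sum]

theorem foldr_dop_smulA (l : List A) (c : A) (f : M → N) :
    l.foldr (dop A) (c • f) = c • l.foldr (dop A) f := by
  induction l with
  | nil => rfl
  | cons a t ih => simp [List.foldr_cons, ih, dop_smulA]

theorem foldr_dop_addpres (l : List A) (f : M → N) (hf : ∀ x y, f (x + y) = f x + f y) :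
    ∀ x y, l.foldr (dop A) f (x + y) = l.foldr (dop A) f x + l.foldr (dop A) f y := by
  induction l with
  | nil => exact hf
  | cons a t ih => exact dop_addpres a _ ih

theorem foldr_dop_perm {l₁ l₂ : List A} (h : l₁.Perm l₂) (f : M → N) :
    l₁.foldr (dop A) f = l₂.foldr (dop A) f :=
  h.foldr_eq f

theorem isDiffOp_foldr {j : ℕ} (l : List A) (f : M → N) (h : IsDiffOp A (j + l.length) f) :
    IsDiffOp A j (l.foldr (dop A) f) := by
  induction l generalizing j with
  | nil => exact h
  | cons a t ih =>
    have h' : IsDiffOp A ((j + 1) + t.length) f := by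
      have : j + (a :: t).length = (j + 1) + t.length := by simp; omega
      rwa [this] at h
    exact (ih (j := j + 1) h') a

theorem isDiffOp_mono {j : ℕ} (f : M → N) (h : IsDiffOp A j f) : IsDiffOp A (j + 1) f := by
  induction j generalizing f with
  | zero => intro a; rw [h a]; intro b; exact dop_zero b
  | succ j ih => intro a; exact ih _ (h a)

theorem foldr_dop_eq_zero {j : ℕ} (l : List A) (f : M → N) (h : IsDiffOp A j f)
    (hl : l.length = j + 1) : l.foldr (dop A) f = 0 := by
  induction j generalizing l f with
  | zero =>
    match l, hl with
    | [a], _ => exact h a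
  | succ j ih =>
    match l, hl with
    | a :: t, hl =>
      have : (a :: t).foldr (dop A) f = (t ++ [a]).foldr (dop A) f :=
        foldr_dop_perm (List.perm_append_singleton a t).symm f
      rw [this, List.foldr_append]
      exact ih t (dop A a f) (h a) (by simpa using hl)

theorem isDiffOp_iff_foldr {j : ℕ} (f : M → N) :
    IsDiffOp A j f ↔ ∀ l : List A, l.length = j + 1 → l.foldr (dop A) f = 0 := by
  constructor
  · intro h l hl; exact foldr_dop_eq_zero l f h hl
  · intro h
    induction j generalizing f with
    | zero => intro a; exact h [a] rfl
    | succ j ih =>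
      intro a
      apply ih
      intro l hl
      have := h (l ++ [a]) (by simp [hl])
      rwa [List.foldr_append] at this

theorem isDiffOp_add {j : ℕ} (f g : M → N) (hf : IsDiffOp A j f) (hg : IsDiffOp A j g) :
    IsDiffOp A j (f + g) := by
  induction j generalizing f g with
  | zero => intro a; rw [dop_add, hf a, hg a, add_zero]
  | succ j ih => intro a; rw [dop_add]; exact ih _ _ (hf a) (hg a)

theorem isDiffOp_zero (j : ℕ) : IsDiffOp A j (0 : M → N) := by
  induction j with
  | zero => intro a; exact dop_zero a
  | succ j ih => intro a; rw [dop_zero]; exact ih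

theorem isDiffOp_sum {j : ℕ} {ι : Type*} (s : Finset ι) (f : ι → (M → N))
    (h : ∀ i ∈ s, IsDiffOp A j (f i)) : IsDiffOp A j (∑ i ∈ s, f i) :=
  Finset.sum_induction f (IsDiffOp A j) (fun _ _ => isDiffOp_add _ _) (isDiffOp_zero j) h

theorem isDiffOp_smulA {j : ℕ} (c : A) (f : M → N) (h : IsDiffOp A j f) :
    IsDiffOp A j (c • f) := by
  induction j generalizing f with
  | zero => intro a; rw [dop_smulA, h a, smul_zero]
  | succ j ih => intro a; rw [dop_smulA]; exact ih _ (h a)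

end Basic

section AtoP
variable {A : Type*} [CommRing A] {P : Type*} [AddCommGroup P] [Module A P]

theorem isDiffOp_zero_eval (f : A → P) (h : IsDiffOp A 0 f) (a : A) : f a = a • f 1 := by
  have := congrFun (h a) 1
  simp only [dop, smul_eq_mul, mul_one, Pi.zero_apply] at this
  exact sub_eq_zero.mp this

theorem symbolMap_perm {k : ℕ} (f : A → P) (v : Fin k → A) (e : Equiv.Perm (Fin k)) :
    symbolMap A k f (v ∘ e) = symbolMap A k f v := by
  unfold symbolMap
  rw [foldr_dop_perm (Equiv.Perm.ofFn_comp_perm e v) f]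

theorem symbolMap_update_zero {k : ℕ} (f : A → P) (w : Fin (k + 1) → A) (x : A) :
    symbolMap A (k + 1) f (Function.update w 0 x)
      = (List.ofFn (w ∘ Fin.succ)).foldr (dop A) f x
        - x • (List.ofFn (w ∘ Fin.succ)).foldr (dop A) f 1 := by
  unfold symbolMap
  rw [List.ofFn_succ]
  have h1 : Function.update w 0 x 0 = x := Function.update_self 0 x w
  have h2 : (fun i : Fin k => Function.update w 0 x i.succ) = w ∘ Fin.succ := by
    funext i
    exact Function.update_of_ne (Fin.succ_ne_zero i) x w
  rw [h1, h2]
  simp only [List.foldr_cons, dop, smul_eq_mul, mul_one]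

theorem symbolMap_eq_zero_of_isDiffOp {k : ℕ} (f : A → P) (h : IsDiffOp A k f) :
    symbolMap A (k + 1) f = 0 := by
  funext v
  unfold symbolMap
  rw [foldr_dop_eq_zero (List.ofFn v) f h (by simp)]
  rfl

theorem isDiffOp_of_symbolMap_eq_zero {k : ℕ} (f : A → P) (hk : IsDiffOp A (k + 1) f)
    (h : symbolMap A (k + 1) f = 0) : IsDiffOp A k f := by
  rw [isDiffOp_iff_foldr]
  intro l hl
  have hord : IsDiffOp A 0 (l.foldr (dop A) f) := by
    apply isDiffOp_foldr
    rwa [hl, Nat.zero_add]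
  funext p
  have h1 : l.foldr (dop A) f 1 = 0 := by
    have : l = List.ofFn l.get := (List.ofFn_get l).symm
    have hv := congrFun h (fun i : Fin (k+1) => l.get (Fin.cast hl.symm i))
    unfold symbolMap at hv
    rw [Pi.zero_apply] at hv
    have : List.ofFn (fun i : Fin (k+1) => l.get (Fin.cast hl.symm i)) = l := by
      apply List.ext_getElem
      · simp [hl]
      · intro i h1 h2
        rw [List.getElem_ofFn]
        simp
    rwa [this] at hv
  rw [isDiffOp_zero_eval _ hord p, h1, smul_zero, Pi.zero_apply]

end AtoP

section Tower
variable {𝕜 : Type*} [Field 𝕜] {A : Type*} [CommRing A] [Algebra 𝕜 A]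
  {P : Type*} [AddCommGroup P] [Module 𝕜 P] [Module A P] [IsScalarTower 𝕜 A P]

theorem dop_smulK (a : A) (c : 𝕜) (f : A → P) : dop A a (c • f) = c • dop A a f := by
  funext p
  simp only [dop, Pi.smul_apply, smul_sub, smul_comm a c]

theorem foldr_dop_smulK (l : List A) (c : 𝕜) (f : A → P) :
    l.foldr (dop A) (c • f) = c • l.foldr (dop A) f := by
  induction l with
  | nil => rfl
  | cons a t ih => simp [List.foldr_cons, ih, dop_smulK]

theorem isDiffOp_smulK {j : ℕ} (c : 𝕜) (f : A → P) (h : IsDiffOp A j f) :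
    IsDiffOp A j (c • f) := by
  induction j generalizing f with
  | zero => intro a; rw [dop_smulK, h a, smul_zero]
  | succ j ih => intro a; rw [dop_smulK]; exact ih _ (h a)

theorem dop_linear (a : A) (f : A → P) (hf : ∀ (c : 𝕜) (x : A), f (c • x) = c • f x) :
    ∀ (c : 𝕜) (x : A), dop A a f (c • x) = c • dop A a f x := by
  intro c x
  calc dop A a f (c • x) = f (a • c • x) - a • f (c • x) := rfl
    _ = c • f (a • x) - c • (a • f x) := by rw [smul_comm a c x, hf, hf, smul_comm a c]
    _ = c • dop A a f x := by rw [← smul_sub]; rfl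

theorem foldr_dop_linear (l : List A) (f : A → P) (hf : ∀ (c : 𝕜) (x : A), f (c • x) = c • f x) :
    ∀ (c : 𝕜) (x : A), l.foldr (dop A) f (c • x) = c • l.foldr (dop A) f x := by
  induction l with
  | nil => exact hf
  | cons a t ih => exact dop_linear a _ ih

/-- The symbol of a differential operator of order `k+1` is a symmetric multiderivation. -/
theorem symbolMap_isSymMultiDeriv {k : ℕ} (Δ : A →ₗ[𝕜] P) (h : IsDiffOp A (k + 1) ⇑Δ) :
    IsSymMultiDeriv 𝕜 A (k + 1) (symbolMap A (k + 1) ⇑Δ) := by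
  have hperm : ∀ (v : Fin (k+1) → A) (e : Equiv.Perm (Fin (k+1))),
      symbolMap A (k+1) ⇑Δ (v ∘ e) = symbolMap A (k+1) ⇑Δ v := fun v e => symbolMap_perm _ v e
  -- reduce statements about slot `i` to slot `0`
  have key : ∀ (v : Fin (k+1) → A) (i : Fin (k+1)), ∃ g : A → P,
      (∀ x y : A, g (x + y) = g x + g y) ∧
      (∀ (c : 𝕜) (x : A), g (c • x) = c • g x) ∧
      (IsDiffOp A 1 g) ∧
      (∀ x : A, symbolMap A (k+1) ⇑Δ (Function.update v i x) = g x - x • g 1) := by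
    intro v i
    set w : Fin (k+1) → A := v ∘ (Equiv.swap 0 i) with hw
    refine ⟨(List.ofFn (w ∘ Fin.succ)).foldr (dop A) ⇑Δ, ?_, ?_, ?_, ?_⟩
    · exact foldr_dop_addpres _ _ (fun x y => map_add Δ x y)
    · exact foldr_dop_linear _ _ (fun c x => map_smul Δ c x)
    · apply isDiffOp_foldr
      have : (1 : ℕ) + (List.ofFn (w ∘ Fin.succ)).length = k + 1 := by
        rw [List.length_ofFn]; omega
      rwa [this]
    · intro x
      have h1 : Function.update v i x = (Function.update v i x) ∘ (Equiv.swap 0 i) ∘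
          (Equiv.swap 0 i) := by
        funext j
        rw [Function.comp_apply, Function.comp_apply, Equiv.swap_apply_self]
      have h2 : (Function.update v i x) ∘ (Equiv.swap 0 i) = Function.update w 0 x := by
        rw [Function.update_comp_equiv v (Equiv.swap 0 i) i x, hw]
        congr 1
        simp
      calc symbolMap A (k+1) ⇑Δ (Function.update v i x)
          = symbolMap A (k+1) ⇑Δ ((Function.update v i x) ∘ (Equiv.swap 0 i)) :=
            (hperm _ (Equiv.swap 0 i)).symm
        _ = symbolMap A (k+1) ⇑Δ (Function.update w 0 x) := by rw [h2]
        _ = _ := symbolMap_update_zero _ w x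
  refine ⟨?_, ?_, hperm, ?_⟩
  · intro v i x y
    obtain ⟨g, hadd, _, _, hval⟩ := key v i
    rw [hval, hval, hval, hadd, add_smul]
    abel
  · intro v i c x
    obtain ⟨g, _, hlin, _, hval⟩ := key v i
    rw [hval, hval, hlin, smul_sub, smul_assoc]
  · intro v i x y
    obtain ⟨g, _, _, hord, hval⟩ := key v i
    have h2 : dop A x (dop A y g) = 0 := (hord y) x
    have h3 := congrFun h2 1
    simp only [dop, smul_eq_mul, mul_one, Pi.zero_apply] at h3
    rw [sub_sub, sub_eq_zero] at h3
    rw [hval, hval, hval, mul_comm x y, h3]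
    simp only [smul_sub, smul_smul, mul_comm]
    abel

end Tower

section Comb

theorem exists_perm_comp {j m' : ℕ} (f g : Fin j → Fin m') (hf : Function.Injective f)
    (hg : Function.Injective g) (hr : Set.range f = Set.range g) :
    ∃ π : Equiv.Perm (Fin j), ∀ i, g (π i) = f i := by
  refine ⟨(Equiv.ofInjective f hf).trans ((Equiv.setCongr hr).trans
    (Equiv.ofInjective g hg).symm), fun i => ?_⟩
  have := Equiv.apply_ofInjective_symm hg ((Equiv.setCongr hr) (Equiv.ofInjective f hf i))
  simpa using this

theorem sum_perm_succAbove {α β : Type*} [AddCommMonoid β] {j : ℕ} (v : Fin (j+1) → α)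
    (t : (Fin (j+1) → α) → β) :
    ∑ m : Fin (j+1), ∑ σ : Equiv.Perm (Fin j), t (Fin.cons (v m) ((v ∘ m.succAbove) ∘ σ))
      = ∑ τ : Equiv.Perm (Fin (j+1)), t (v ∘ τ) := by
  rw [← Equiv.sum_comp (Equiv.Perm.decomposeFin).symm (fun τ => t (v ∘ τ)),
    Fintype.sum_prod_type]
  refine Finset.sum_congr rfl fun m _ => ?_
  set r : Fin j → Fin (j+1) := fun i => Equiv.swap 0 m i.succ with hrdef
  have hr : ∀ σ : Equiv.Perm (Fin j), v ∘ ⇑(Equiv.Perm.decomposeFin.symm (m, σ))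
      = Fin.cons (v m) ((v ∘ r) ∘ σ) := by
    intro σ; funext x
    refine Fin.cases ?_ (fun i => ?_) x
    · simp
    · simp [Equiv.Perm.decomposeFin_symm_apply_succ, hrdef]
  have hrinj : Function.Injective r := fun a b hab => by
    have := (Equiv.swap 0 m).injective hab
    exact Fin.succ_injective _ this
  have hrange : Set.range m.succAbove = Set.range r := by
    have h1 : Set.range r = ⇑(Equiv.swap 0 m) '' Set.range (Fin.succ : Fin j → Fin (j+1)) :=
      Set.range_comp _ _
    rw [Fin.range_succAbove, h1, Fin.range_succ,
      Set.image_compl_eq (Equiv.bijective _), Set.image_singleton, Equiv.swap_apply_left]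
  obtain ⟨π, hπ⟩ := exists_perm_comp m.succAbove r (Fin.succAbove_right_injective) hrinj hrange
  have key : ∀ σ : Equiv.Perm (Fin j),
      ((v ∘ m.succAbove) ∘ ⇑σ) = ((v ∘ r) ∘ ⇑(π * σ)) := by
    intro σ
    funext i
    simp only [Function.comp_apply, Equiv.Perm.coe_mul]
    rw [← hπ (σ i)]
  rw [Finset.sum_congr rfl fun σ _ => by rw [key σ]]
  rw [show (fun σ : Equiv.Perm (Fin j) => t (Fin.cons (v m) ((v ∘ r) ∘ ⇑(π * σ))))
      = fun σ => (fun τ : Equiv.Perm (Fin j) => t (Fin.cons (v m) ((v ∘ r) ∘ ⇑τ)))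
        ((Equiv.mulLeft π) σ) from rfl]
  rw [Equiv.sum_comp (Equiv.mulLeft π) (fun τ : Equiv.Perm (Fin j) =>
    t (Fin.cons (v m) ((v ∘ r) ∘ ⇑τ)))]
  exact Finset.sum_congr rfl fun σ _ => by rw [hr σ]

theorem ofFn_eraseIdx {α : Type*} {j : ℕ} (v : Fin (j+1) → α) (m : Fin (j+1)) :
    (List.ofFn v).eraseIdx (m : ℕ) = List.ofFn (v ∘ m.succAbove) := by
  apply List.ext_getElem
  · rw [List.length_eraseIdx]
    simp [m.isLt]
  · intro i h1 h2
    have him : i < j := by simpa using h2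
    rw [List.getElem_eraseIdx]
    by_cases hc : i < (m : ℕ)
    · rw [dif_pos hc, List.getElem_ofFn, List.getElem_ofFn]
      simp only [Function.comp_apply]
      have hlt : (⟨i, him⟩ : Fin j).castSucc < m := by
        rw [Fin.lt_iff_val_lt_val, Fin.coe_castSucc]; exact hc
      congr 1
      apply Fin.ext
      simp [Fin.succAbove_of_castSucc_lt _ _ hlt]
    · rw [dif_neg hc, List.getElem_ofFn, List.getElem_ofFn]
      simp only [Function.comp_apply]
      have hle : m ≤ (⟨i, him⟩ : Fin j).castSucc := by
        rw [Fin.le_iff_val_le_val, Fin.coe_castSucc]; exact Nat.le_of_not_lt hc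
      congr 1
      apply Fin.ext
      simp [Fin.succAbove_of_le_castSucc _ _ hle]

end Comb

section Tower2
variable {𝕜 : Type*} [Field 𝕜] {A : Type*} [CommRing A] [Algebra 𝕜 A]
  {P : Type*} [AddCommGroup P] [Module 𝕜 P] [Module A P] [IsScalarTower 𝕜 A P]

theorem dop_comp_mulLeft (b c : A) (f : A → P) :
    dop A b (f ∘ fun p => c * p) = (dop A b f) ∘ (fun p => c * p) := by
  funext p
  simp only [dop, Function.comp_apply, smul_eq_mul]
  rw [mul_left_comm]

theorem isDiffOp_comp_mulLeft {j : ℕ} (c : A) (f : A → P) (h : IsDiffOp A j f) :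
    IsDiffOp A j (f ∘ fun p => c * p) := by
  induction j generalizing f with
  | zero =>
    intro b
    rw [dop_comp_mulLeft, h b]
    rfl
  | succ j ih => intro b; rw [dop_comp_mulLeft]; exact ih _ (h b)

theorem dop_comp_deriv (b : A) (X : A → A) (hX : ∀ a b, X (a * b) = a * X b + b * X a)
    (g : A → P) (hadd : ∀ x y, g (x + y) = g x + g y) :
    dop A b (g ∘ X) = ((dop A b g) ∘ X) + (g ∘ fun p => X b * p) := by
  funext p
  simp only [dop, Function.comp_apply, Pi.add_apply, smul_eq_mul]
  rw [hX b p, hadd, mul_comm p (X b)]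
  abel

theorem isDiffOp_comp_deriv (X : A → A) (hX : ∀ a b, X (a * b) = a * X b + b * X a) :
    ∀ {j : ℕ} (g : A → P), (∀ x y, g (x + y) = g x + g y) → IsDiffOp A j g →
      IsDiffOp A (j + 1) (g ∘ X) := by
  intro j
  induction j with
  | zero =>
    intro g hadd hg b
    rw [dop_comp_deriv b X hX g hadd, hg b]
    have h0 : ((0 : A → P) ∘ X) + (g ∘ fun p => X b * p) = g ∘ fun p => X b * p := by
      funext p; simp
    rw [h0]
    exact isDiffOp_comp_mulLeft _ _ hg
  | succ j ih =>
    intro g hadd hg b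
    rw [dop_comp_deriv b X hX g hadd]
    exact isDiffOp_add _ _ (ih _ (dop_addpres b g hadd) (hg b))
      (isDiffOp_comp_mulLeft _ _ hg)

theorem foldr_dop_comp_deriv (X : A → A) (hX : ∀ a b, X (a * b) = a * X b + b * X a)
    (g : A → P) (hadd : ∀ x y, g (x + y) = g x + g y) (l : List A) :
    l.foldr (dop A) (g ∘ X) = (l.foldr (dop A) g) ∘ X
      + ∑ m : Fin l.length, (l.eraseIdx (m : ℕ)).foldr (dop A) g ∘ (fun p => X (l.get m) * p) := by
  induction l with
  | nil => simp
  | cons a t ih =>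
    calc (a :: t).foldr (dop A) (g ∘ X) = dop A a (t.foldr (dop A) (g ∘ X)) := rfl
      _ = dop A a ((t.foldr (dop A) g) ∘ X)
          + ∑ m : Fin t.length,
            dop A a ((t.eraseIdx (m : ℕ)).foldr (dop A) g ∘ fun p => X (t.get m) * p) := by
          rw [ih, dop_add, dop_sum]
      _ = ((dop A a (t.foldr (dop A) g)) ∘ X + (t.foldr (dop A) g) ∘ fun p => X a * p)
          + ∑ m : Fin t.length,
            (dop A a ((t.eraseIdx (m : ℕ)).foldr (dop A) g)) ∘ fun p => X (t.get m) * p := by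
          rw [dop_comp_deriv a X hX _ (foldr_dop_addpres t g hadd)]
          congr 1
          exact Finset.sum_congr rfl fun m _ => dop_comp_mulLeft a _ _
      _ = _ := by
          simp only [List.length_cons]
          rw [Fin.sum_univ_succ]
          simp only [List.eraseIdx_cons_succ, List.eraseIdx_cons_zero, List.get_cons_succ,
            List.get_cons_zero, List.foldr_cons, Fin.val_zero, Fin.val_succ]
          abel

end Tower2

section MD
variable (𝕜 : Type*) [Field 𝕜] (A : Type*) [CommRing A] [Algebra 𝕜 A]
  {P : Type*} [AddCommGroup P] [Module 𝕜 P] [Module A P] [IsScalarTower 𝕜 A P]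

/-- Multiderivation (without the symmetry condition). -/
def IsMultiDeriv (k : ℕ) (t : (Fin k → A) → P) : Prop :=
  (∀ (v : Fin k → A) (i : Fin k) (x y : A),
      t (Function.update v i (x + y)) = t (Function.update v i x) + t (Function.update v i y)) ∧
  (∀ (v : Fin k → A) (i : Fin k) (c : 𝕜) (x : A),
      t (Function.update v i (c • x)) = c • t (Function.update v i x)) ∧
  (∀ (v : Fin k → A) (i : Fin k) (x y : A),
      t (Function.update v i (x * y)) =
        x • t (Function.update v i y) + y • t (Function.update v i x))

variable {𝕜 A}

theorem smul_commAA (a x : A) (p : P) : a • x • p = x • a • p := by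
  rw [smul_smul, mul_comm, mul_smul]

variable (𝕜 A) in
/-- Multiderivations form an `A`-submodule of the function space. -/
def multiDerivSub (k : ℕ) : Submodule A ((Fin k → A) → P) where
  carrier := {t | IsMultiDeriv 𝕜 A k t}
  zero_mem' := ⟨fun v i x y => by simp, fun v i c x => by simp, fun v i x y => by simp⟩
  add_mem' := by
    rintro t s ⟨t1, t2, t3⟩ ⟨s1, s2, s3⟩
    refine ⟨fun v i x y => ?_, fun v i c x => ?_, fun v i x y => ?_⟩
    · simp only [Pi.add_apply, t1 v i x y, s1 v i x y]; abel
    · simp only [Pi.add_apply, t2 v i c x, s2 v i c x, smul_add]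
    · simp only [Pi.add_apply, t3 v i x y, s3 v i x y, smul_add]; abel
  smul_mem' := by
    rintro a t ⟨t1, t2, t3⟩
    refine ⟨fun v i x y => ?_, fun v i c x => ?_, fun v i x y => ?_⟩
    · simp only [Pi.smul_apply, t1 v i x y, smul_add]
    · simp only [Pi.smul_apply, t2 v i c x]
      rw [smul_comm]
    · simp only [Pi.smul_apply, t3 v i x y, smul_add]
      rw [smul_commAA a x, smul_commAA a y]


theorem cons_eq_update {k : ℕ} (x : A) (w : Fin k → A) :
    (Fin.cons x w : Fin (k + 1) → A) = Function.update (Fin.cons (0 : A) w) 0 x := by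
  rw [Fin.update_cons_zero]

variable (𝕜 A) in
/-- The derivation obtained from a multiderivation by currying the first slot. -/
noncomputable def slotDeriv {k : ℕ} (t : (Fin (k + 1) → A) → P)
    (h : IsMultiDeriv 𝕜 A (k + 1) t) : Derivation 𝕜 A ((Fin k → A) → P) :=
  Derivation.mk'
    { toFun := fun a => fun w => t (Fin.cons a w)
      map_add' := fun a b => by
        funext w
        show t (Fin.cons (a + b) w) = t (Fin.cons a w) + t (Fin.cons b w)
        rw [cons_eq_update (a + b) w, cons_eq_update a w, cons_eq_update b w]
        exact h.1 _ 0 a b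
      map_smul' := fun c a => by
        funext w
        show t (Fin.cons (c • a) w) = c • t (Fin.cons a w)
        rw [cons_eq_update (c • a) w, cons_eq_update a w]
        exact h.2.1 _ 0 c a }
    (fun a b => by
      funext w
      show t (Fin.cons (a * b) w) = (a • (fun w => t (Fin.cons b w)) + b • (fun w => t (Fin.cons a w))) w
      simp only [Pi.add_apply, Pi.smul_apply]
      rw [cons_eq_update (a * b) w, cons_eq_update a w, cons_eq_update b w]
      exact h.2.2 _ 0 a b)

theorem slotDeriv_apply {k : ℕ} (t : (Fin (k + 1) → A) → P) (h : IsMultiDeriv 𝕜 A (k + 1) t)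
    (a : A) (w : Fin k → A) : slotDeriv 𝕜 A t h a w = t (Fin.cons a w) := rfl

theorem liftMD_isMultiDeriv {k : ℕ} (t : (Fin (k + 1) → A) → P)
    (h : IsMultiDeriv 𝕜 A (k + 1) t) (x : KaehlerDifferential 𝕜 A) :
    IsMultiDeriv 𝕜 A k ((slotDeriv 𝕜 A t h).liftKaehlerDifferential x) := by
  have hspan := KaehlerDifferential.span_range_derivation 𝕜 A
  have hsub : Submodule.span A (Set.range (KaehlerDifferential.D 𝕜 A)) ≤
      (multiDerivSub 𝕜 A k).comap (slotDeriv 𝕜 A t h).liftKaehlerDifferential := by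
    rw [Submodule.span_le]
    rintro _ ⟨a, rfl⟩
    show IsMultiDeriv 𝕜 A k ((slotDeriv 𝕜 A t h).liftKaehlerDifferential
      (KaehlerDifferential.D 𝕜 A a))
    rw [Derivation.liftKaehlerDifferential_comp_D]
    refine ⟨fun v i x y => ?_, fun v i c x => ?_, fun v i x y => ?_⟩
    · show t (Fin.cons a (Function.update v i (x + y)))
        = t (Fin.cons a (Function.update v i x)) + t (Fin.cons a (Function.update v i y))
      simp only [Fin.cons_update]
      exact h.1 _ i.succ x y
    · show t (Fin.cons a (Function.update v i (c • x)))
        = c • t (Fin.cons a (Function.update v i x))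
      simp only [Fin.cons_update]
      exact h.2.1 _ i.succ c x
    · show t (Fin.cons a (Function.update v i (x * y)))
        = x • t (Fin.cons a (Function.update v i y)) + y • t (Fin.cons a (Function.update v i x))
      simp only [Fin.cons_update]
      exact h.2.2 _ i.succ x y
  exact hsub (by rw [hspan]; exact Submodule.mem_top)

theorem exists_dual_basis (R M : Type*) [CommRing R] [AddCommGroup M] [Module R M]
    [Module.Finite R M] [Module.Projective R M] :
    ∃ (n : ℕ) (ω : Fin n → M) (φ : Fin n → (M →ₗ[R] R)), ∀ x, ∑ i, φ i x • ω i = x := by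
  obtain ⟨n, π, hπ⟩ := Module.Finite.exists_fin' R M
  obtain ⟨σ, hσ⟩ := Module.projective_lifting_property π LinearMap.id hπ
  refine ⟨n, fun i => π (Pi.single i 1), fun i => (LinearMap.proj i).comp σ, fun x => ?_⟩
  have key : ∀ i : Fin n, ((LinearMap.proj i).comp σ) x • π (Pi.single i (1 : R))
      = π (Pi.single i (σ x i)) := by
    intro i
    rw [← map_smul]
    congr 1
    funext j
    by_cases hj : j = i
    · subst hj; simp
    · simp [Pi.single_eq_of_ne hj]
  rw [Finset.sum_congr rfl fun i _ => key i, ← map_sum, Finset.univ_sum_single]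
  exact DFunLike.congr_fun hσ x

end MD

section Op
variable (𝕜 : Type*) [Field 𝕜] (A : Type*) [CommRing A] [Algebra 𝕜 A]
  {P : Type*} [AddCommGroup P] [Module 𝕜 P] [Module A P] [IsScalarTower 𝕜 A P]
  {n : ℕ} (ω : Fin n → KaehlerDifferential 𝕜 A)
  (φ : Fin n → (KaehlerDifferential 𝕜 A →ₗ[A] A))

/-- The derivation `A → A` associated with the dual-basis element `φ i`. -/
noncomputable def Xder (i : Fin n) : Derivation 𝕜 A A :=
  (φ i).compDer (KaehlerDifferential.D 𝕜 A)

open Classical in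
/-- A differential operator whose symbol is `(k)! •` the given multiderivation. -/
noncomputable def Op : (j : ℕ) → ((Fin j → A) → P) → (A →ₗ[𝕜] P)
  | 0, t =>
    { toFun := fun a => a • t (fun i => i.elim0)
      map_add' := fun a b => add_smul a b _
      map_smul' := fun c a => by simp [smul_assoc] }
  | j + 1, t =>
    if h : IsMultiDeriv 𝕜 A (j + 1) t then
      ∑ i : Fin n,
        (Op j ((slotDeriv 𝕜 A t h).liftKaehlerDifferential (ω i))).comp
          (Xder 𝕜 A φ i).toLinearMap
    else 0

theorem Xder_leibniz (i : Fin n) (a b : A) :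
    Xder 𝕜 A φ i (a * b) = a * Xder 𝕜 A φ i b + b * Xder 𝕜 A φ i a := by
  have := (Xder 𝕜 A φ i).leibniz a b
  simpa [smul_eq_mul] using this

theorem op_isDiffOp : ∀ (j : ℕ) (t : (Fin j → A) → P), IsMultiDeriv 𝕜 A j t →
    IsDiffOp A j ⇑(Op 𝕜 A ω φ j t) := by
  intro j
  induction j with
  | zero =>
    intro t _ a
    funext p
    show (Op 𝕜 A ω φ 0 t) (a • p) - a • (Op 𝕜 A ω φ 0 t) p = 0
    show (a • p) • t (fun i => i.elim0) - a • (p • t (fun i => i.elim0)) = 0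
    rw [smul_assoc, sub_self]
  | succ j ih =>
    intro t h
    have hOp : Op 𝕜 A ω φ (j + 1) t = ∑ i : Fin n,
        (Op 𝕜 A ω φ j ((slotDeriv 𝕜 A t h).liftKaehlerDifferential (ω i))).comp
          (Xder 𝕜 A φ i).toLinearMap := by
      rw [Op, dif_pos h]
    rw [hOp, LinearMap.coe_sum]
    apply isDiffOp_sum
    intro i _
    rw [LinearMap.coe_comp]
    exact isDiffOp_comp_deriv _ (Xder_leibniz 𝕜 A φ i) _
      (fun x y => map_add _ x y)
      (ih _ (liftMD_isMultiDeriv t h (ω i)))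

theorem op_symbol (hdual : ∀ x : KaehlerDifferential 𝕜 A, ∑ i, φ i x • ω i = x) :
    ∀ (j : ℕ) (t : (Fin j → A) → P), IsMultiDeriv 𝕜 A j t → ∀ v : Fin j → A,
      symbolMap A j ⇑(Op 𝕜 A ω φ j t) v = ∑ τ : Equiv.Perm (Fin j), t (v ∘ τ) := by
  intro j
  induction j with
  | zero =>
    intro t _ v
    have h1 : symbolMap A 0 ⇑(Op 𝕜 A ω φ 0 t) v = Op 𝕜 A ω φ 0 t 1 := by
      simp [symbolMap, List.ofFn_zero]
    rw [h1]
    show (1 : A) • t (fun i => i.elim0) = _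
    rw [one_smul]
    haveI : Unique (Equiv.Perm (Fin 0)) := ⟨⟨1⟩, fun a => Equiv.ext fun x => x.elim0⟩
    rw [Fintype.sum_unique (fun τ : Equiv.Perm (Fin 0) => t (v ∘ τ))]
    congr 1
    funext i
    exact i.elim0
  | succ j ih =>
    intro t h v
    set Lt := (slotDeriv 𝕜 A t h).liftKaehlerDifferential with hLt
    have hlen : (List.ofFn v).length = j + 1 := by simp
    have hMDi : ∀ i : Fin n, IsMultiDeriv 𝕜 A j (Lt (ω i)) :=
      fun i => liftMD_isMultiDeriv t h (ω i)
    have hOp : Op 𝕜 A ω φ (j + 1) t = ∑ i : Fin n,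
        (Op 𝕜 A ω φ j (Lt (ω i))).comp (Xder 𝕜 A φ i).toLinearMap := by
      rw [Op, dif_pos h]
    -- step 1 : expand the sum of operators
    have step1 : symbolMap A (j + 1) ⇑(Op 𝕜 A ω φ (j + 1) t) v
        = ∑ i : Fin n,
            ((List.ofFn v).foldr (dop A) (⇑(Op 𝕜 A ω φ j (Lt (ω i))) ∘ ⇑(Xder 𝕜 A φ i))) 1 := by
      rw [hOp]
      unfold symbolMap
      rw [LinearMap.coe_sum]
      have : (∑ i : Fin n, ⇑((Op 𝕜 A ω φ j (Lt (ω i))).comp (Xder 𝕜 A φ i).toLinearMap))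
          = ∑ i : Fin n, (⇑(Op 𝕜 A ω φ j (Lt (ω i))) ∘ ⇑(Xder 𝕜 A φ i)) := by
        refine Finset.sum_congr rfl fun i _ => ?_
        rw [LinearMap.coe_comp]
        rfl
      rw [this, foldr_dop_sum, Finset.sum_apply]
    -- step 2 : evaluate each summand using the derivation-composition formula
    have step2 : ∀ i : Fin n,
        ((List.ofFn v).foldr (dop A) (⇑(Op 𝕜 A ω φ j (Lt (ω i))) ∘ ⇑(Xder 𝕜 A φ i))) 1
          = ∑ m : Fin (List.ofFn v).length, Xder 𝕜 A φ i ((List.ofFn v).get m) •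
              symbolMap A j ⇑(Op 𝕜 A ω φ j (Lt (ω i)))
                (v ∘ (Fin.cast hlen m).succAbove) := by
      intro i
      rw [foldr_dop_comp_deriv _ (Xder_leibniz 𝕜 A φ i) _ (fun x y => map_add _ x y) (List.ofFn v)]
      rw [Pi.add_apply, Function.comp_apply,
        foldr_dop_eq_zero (List.ofFn v) _ (op_isDiffOp 𝕜 A ω φ j _ (hMDi i)) hlen]
      rw [Pi.zero_apply, zero_add, Finset.sum_apply]
      refine Finset.sum_congr rfl fun m _ => ?_
      have hlen' : ((List.ofFn v).eraseIdx (m : ℕ)).length = j := by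
        have hm : (m : ℕ) < (List.ofFn v).length := m.isLt
        rw [List.length_eraseIdx, if_pos hm, hlen]
        omega
      have hord : IsDiffOp A 0 (((List.ofFn v).eraseIdx (m : ℕ)).foldr (dop A)
          ⇑(Op 𝕜 A ω φ j (Lt (ω i)))) := by
        apply isDiffOp_foldr
        rw [Nat.zero_add, hlen']
        exact op_isDiffOp 𝕜 A ω φ j _ (hMDi i)
      have herase : (List.ofFn v).eraseIdx (m : ℕ)
          = List.ofFn (v ∘ (Fin.cast hlen m).succAbove) :=
        ofFn_eraseIdx v (Fin.cast hlen m)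
      calc (((List.ofFn v).eraseIdx (m : ℕ)).foldr (dop A) ⇑(Op 𝕜 A ω φ j (Lt (ω i))) ∘
              fun p => Xder 𝕜 A φ i ((List.ofFn v).get m) * p) 1
          = ((List.ofFn v).eraseIdx (m : ℕ)).foldr (dop A) ⇑(Op 𝕜 A ω φ j (Lt (ω i)))
              (Xder 𝕜 A φ i ((List.ofFn v).get m)) := by
            rw [Function.comp_apply, mul_one]
        _ = Xder 𝕜 A φ i ((List.ofFn v).get m) •
              ((List.ofFn v).eraseIdx (m : ℕ)).foldr (dop A) ⇑(Op 𝕜 A ω φ j (Lt (ω i))) 1 :=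
            isDiffOp_zero_eval _ hord _
        _ = Xder 𝕜 A φ i ((List.ofFn v).get m) • symbolMap A j ⇑(Op 𝕜 A ω φ j (Lt (ω i)))
              (v ∘ (Fin.cast hlen m).succAbove) := by
            rw [herase]
            rfl
    -- step 3 : collapse the dual-basis sum
    have collapse : ∀ (a : A) (w : Fin j → A),
        ∑ i : Fin n, Xder 𝕜 A φ i a • (Lt (ω i)) w = t (Fin.cons a w) := by
      intro a w
      have h1 : ∀ i : Fin n, Xder 𝕜 A φ i a • (Lt (ω i)) w
          = (Lt (φ i (KaehlerDifferential.D 𝕜 A a) • ω i)) w := by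
        intro i
        rw [map_smul, Pi.smul_apply]
        rfl
      rw [Finset.sum_congr rfl fun i _ => h1 i]
      have h2 : ∑ i : Fin n, (Lt (φ i (KaehlerDifferential.D 𝕜 A a) • ω i)) w
          = (Lt (∑ i : Fin n, φ i (KaehlerDifferential.D 𝕜 A a) • ω i)) w := by
        rw [map_sum, Finset.sum_apply]
      rw [h2, hdual, hLt, Derivation.liftKaehlerDifferential_comp_D]
      rfl
    have step4 : ∀ m : Fin (List.ofFn v).length,
        ∑ i : Fin n, Xder 𝕜 A φ i ((List.ofFn v).get m) •
            symbolMap A j ⇑(Op 𝕜 A ω φ j (Lt (ω i))) (v ∘ (Fin.cast hlen m).succAbove)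
          = ∑ σ : Equiv.Perm (Fin j),
              t (Fin.cons (v (Fin.cast hlen m))
                ((v ∘ (Fin.cast hlen m).succAbove) ∘ σ)) := by
      intro m
      have hget : (List.ofFn v).get m = v (Fin.cast hlen m) := by
        rw [List.get_ofFn]
      calc ∑ i : Fin n, Xder 𝕜 A φ i ((List.ofFn v).get m) •
              symbolMap A j ⇑(Op 𝕜 A ω φ j (Lt (ω i))) (v ∘ (Fin.cast hlen m).succAbove)
          = ∑ i : Fin n, Xder 𝕜 A φ i ((List.ofFn v).get m) •
              ∑ σ : Equiv.Perm (Fin j), (Lt (ω i)) ((v ∘ (Fin.cast hlen m).succAbove) ∘ σ) := by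
            refine Finset.sum_congr rfl fun i _ => ?_
            rw [ih _ (hMDi i)]
        _ = ∑ σ : Equiv.Perm (Fin j), ∑ i : Fin n, Xder 𝕜 A φ i ((List.ofFn v).get m) •
              (Lt (ω i)) ((v ∘ (Fin.cast hlen m).succAbove) ∘ σ) := by
            rw [Finset.sum_congr rfl fun i (_ : i ∈ Finset.univ) => Finset.smul_sum]
            exact Finset.sum_comm
        _ = ∑ σ : Equiv.Perm (Fin j),
              t (Fin.cons ((List.ofFn v).get m) ((v ∘ (Fin.cast hlen m).succAbove) ∘ σ)) := by
            exact Finset.sum_congr rfl fun σ _ => collapse _ _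
        _ = _ := by rw [hget]
    calc symbolMap A (j + 1) ⇑(Op 𝕜 A ω φ (j + 1) t) v
        = ∑ i : Fin n, ∑ m : Fin (List.ofFn v).length, Xder 𝕜 A φ i ((List.ofFn v).get m) •
            symbolMap A j ⇑(Op 𝕜 A ω φ j (Lt (ω i))) (v ∘ (Fin.cast hlen m).succAbove) := by
          rw [step1]
          exact Finset.sum_congr rfl fun i _ => step2 i
      _ = ∑ m : Fin (List.ofFn v).length, ∑ i : Fin n, Xder 𝕜 A φ i ((List.ofFn v).get m) •
            symbolMap A j ⇑(Op 𝕜 A ω φ j (Lt (ω i))) (v ∘ (Fin.cast hlen m).succAbove) :=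
          Finset.sum_comm
      _ = ∑ m : Fin (List.ofFn v).length, ∑ σ : Equiv.Perm (Fin j),
            t (Fin.cons (v (Fin.cast hlen m)) ((v ∘ (Fin.cast hlen m).succAbove) ∘ σ)) :=
          Finset.sum_congr rfl fun m _ => step4 m
      _ = ∑ m' : Fin (j + 1), ∑ σ : Equiv.Perm (Fin j),
            t (Fin.cons (v m') ((v ∘ m'.succAbove) ∘ σ)) :=
          Fintype.sum_equiv (finCongr hlen) _ _ fun m => rfl
      _ = ∑ τ : Equiv.Perm (Fin (j + 1)), t (v ∘ τ) := sum_perm_succAbove v t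

end Op


/-- here the `k ≥ 1` of the informal statement is `k + 1`.  Over a
smooth algebra (`Ω_{A/𝕜}` finitely generated and projective) over a field of
characteristic zero:  for `Δ ∈ Diff_{k+1}(A,P)` the map `s_Δ` is a symmetric
`(k+1)`-multiderivation; `Δ ↦ s_Δ` is `A`-linear, its kernel is exactly
`Diff_k(A,P)`, and it maps `Diff_{k+1}(A,P)` onto the symmetric
`(k+1)`-multiderivations; hence `Smbl_{k+1}(A,P)` is isomorphic to the module of
symmetric `(k+1)`-multiderivations of `A` with values in `P`. -/
theorem symbol_module_description
    (𝕜 : Type*) [Field 𝕜] [CharZero 𝕜] (A : Type*) [CommRing A] [Algebra 𝕜 A]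
    [Module.Finite A (KaehlerDifferential 𝕜 A)]
    [Module.Projective A (KaehlerDifferential 𝕜 A)]
    (P : Type*) [AddCommGroup P] [Module 𝕜 P] [Module A P] [IsScalarTower 𝕜 A P]
    (k : ℕ) :
    -- s_Δ is a symmetric multiderivation
    (∀ Δ : A →ₗ[𝕜] P, IsDiffOp A (k + 1) ⇑Δ →
        IsSymMultiDeriv 𝕜 A (k + 1) (symbolMap A (k + 1) ⇑Δ)) ∧
    -- Δ ↦ s_Δ is A-linear
    (∀ Δ Δ' : A →ₗ[𝕜] P, IsDiffOp A (k + 1) ⇑Δ → IsDiffOp A (k + 1) ⇑Δ' →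
        symbolMap A (k + 1) ⇑(Δ + Δ')
          = symbolMap A (k + 1) ⇑Δ + symbolMap A (k + 1) ⇑Δ') ∧
    (∀ (a : A) (Δ : A →ₗ[𝕜] P), IsDiffOp A (k + 1) ⇑Δ →
        symbolMap A (k + 1) ⇑(a • Δ) = a • symbolMap A (k + 1) ⇑Δ) ∧
    -- its kernel is exactly Diff_k(A,P)
    (∀ Δ : A →ₗ[𝕜] P, IsDiffOp A (k + 1) ⇑Δ →
        (symbolMap A (k + 1) ⇑Δ = 0 ↔ IsDiffOp A k ⇑Δ)) ∧
    -- and it is surjective onto the symmetric multiderivations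
    (∀ s : (Fin (k + 1) → A) → P, IsSymMultiDeriv 𝕜 A (k + 1) s →
        ∃ Δ : A →ₗ[𝕜] P, IsDiffOp A (k + 1) ⇑Δ ∧ symbolMap A (k + 1) ⇑Δ = s) := by
  refine ⟨fun Δ h => symbolMap_isSymMultiDeriv Δ h, ?_, ?_, ?_, ?_⟩
  · -- additivity
    intro Δ Δ' _ _
    funext v
    have hc : ⇑(Δ + Δ') = ⇑Δ + ⇑Δ' := rfl
    unfold symbolMap
    rw [hc, foldr_dop_add]
    rfl
  · -- A-linearity
    intro a Δ _
    funext v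
    have hc : ⇑(a • Δ) = a • ⇑Δ := rfl
    unfold symbolMap
    rw [hc, foldr_dop_smulA]
    rfl
  · -- kernel
    intro Δ h
    exact ⟨fun hz => isDiffOp_of_symbolMap_eq_zero ⇑Δ h hz,
      fun hk => symbolMap_eq_zero_of_isDiffOp ⇑Δ hk⟩
  · -- surjectivity
    intro s hs
    obtain ⟨n, ω, φ, hdual⟩ := exists_dual_basis A (KaehlerDifferential 𝕜 A)
    have hMD : IsMultiDeriv 𝕜 A (k + 1) s := ⟨hs.1, hs.2.1, hs.2.2.2⟩
    set c : 𝕜 := ((Nat.factorial (k + 1) : 𝕜))⁻¹ with hc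
    refine ⟨c • Op 𝕜 A ω φ (k + 1) s, ?_, ?_⟩
    · have : ⇑(c • Op 𝕜 A ω φ (k + 1) s) = c • ⇑(Op 𝕜 A ω φ (k + 1) s) := rfl
      rw [this]
      exact isDiffOp_smulK c _ (op_isDiffOp 𝕜 A ω φ (k + 1) s hMD)
    · funext v
      have hcoe : ⇑(c • Op 𝕜 A ω φ (k + 1) s) = c • ⇑(Op 𝕜 A ω φ (k + 1) s) := rfl
      have h1 : symbolMap A (k + 1) ⇑(c • Op 𝕜 A ω φ (k + 1) s) v
          = c • symbolMap A (k + 1) ⇑(Op 𝕜 A ω φ (k + 1) s) v := by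
        unfold symbolMap
        rw [hcoe, foldr_dop_smulK]
        rfl
      rw [h1, op_symbol 𝕜 A ω φ hdual (k + 1) s hMD v]
      have h2 : ∑ τ : Equiv.Perm (Fin (k + 1)), s (v ∘ τ)
          = (Nat.factorial (k + 1)) • s v := by
        rw [Finset.sum_congr rfl fun τ _ => hs.2.2.1 v τ, Finset.sum_const, Finset.card_univ,
          Fintype.card_perm, Fintype.card_fin]
      rw [h2, ← Nat.cast_smul_eq_nsmul 𝕜, smul_smul, hc,
        inv_mul_cancel₀ (Nat.cast_ne_zero.mpr (Nat.factorial_ne_zero (k + 1))), one_smul]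
end

section
/- Let V be a vector space over a field 𝕜, u : V → 𝕜 a linear functional, and v ∈ V an element with u(v) ≠ 0. Let d : Λ^k(V) → Λ^{k−1}(V) be the interior product with u, determined by d(v₁∧⋯∧v_k) = Σ_{i=1}^k (−1)^{i+1} u(v_i)·v₁∧⋯∧v̂_i∧⋯∧v_k, and let s : Λ^k(V) → Λ^{k+1}(V) be the exterior product with v, s(w) = v∧w. Then d∘s + s∘d = u(v)·id on every Λ^k(V); consequently both complexes 0 ← 𝕜 ← V ← Λ²(V) ← ⋯ (with differential d) and 0 → 𝕜 → V → Λ²(V) → ⋯ (with differential s) are exact in every degree. -/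
section
variable (𝕜 : Type*) [Field 𝕜] (V : Type*) [AddCommGroup V] [Module 𝕜 V]

/-- `wedgeList v = v₁ ∧ ⋯ ∧ v_m`, the product `ι(v₁) ⋯ ι(v_m)` in the exterior
algebra. -/
noncomputable def wedgeList {m : ℕ} (v : Fin m → V) : ExteriorAlgebra 𝕜 V :=
  ((List.ofFn v).map ⇑(ExteriorAlgebra.ι 𝕜 (M := V))).prod

/-- The `k`-th exterior power `Λ^k(V)`, as the subspace of the exterior algebra spanned
by the decomposable elements `v₁ ∧ ⋯ ∧ v_k`. -/
noncomputable def extPow (k : ℕ) : Submodule 𝕜 (ExteriorAlgebra 𝕜 V) :=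
  Submodule.span 𝕜 {x | ∃ v : Fin k → V, x = wedgeList 𝕜 V v}

/-- `v₁ ∧ ⋯ ∧ v̂_j ∧ ⋯ ∧ v_m` (the `j`-th factor omitted). -/
noncomputable def wedgeListOmit {m : ℕ} (v : Fin m → V) (j : Fin m) :
    ExteriorAlgebra 𝕜 V :=
  (((List.ofFn v).eraseIdx (j : ℕ)).map ⇑(ExteriorAlgebra.ι 𝕜 (M := V))).prod

end

section Aux
variable {𝕜 : Type*} [Field 𝕜] {V : Type*} [AddCommGroup V] [Module 𝕜 V]

lemma wedgeList_cons {m : ℕ} (v : V) (w : Fin m → V) :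
    wedgeList 𝕜 V (Fin.cons v w) = ExteriorAlgebra.ι 𝕜 v * wedgeList 𝕜 V w := by
  simp [wedgeList, List.ofFn_succ]

lemma wedgeListOmit_cons_zero {m : ℕ} (v : V) (w : Fin m → V) :
    wedgeListOmit 𝕜 V (Fin.cons v w) 0 = wedgeList 𝕜 V w := by
  simp [wedgeListOmit, wedgeList, List.ofFn_succ]

lemma wedgeListOmit_cons_succ {m : ℕ} (v : V) (w : Fin m → V) (j : Fin m) :
    wedgeListOmit 𝕜 V (Fin.cons v w) j.succ
      = ExteriorAlgebra.ι 𝕜 v * wedgeListOmit 𝕜 V w j := by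
  simp [wedgeListOmit, List.ofFn_succ, List.eraseIdx_cons_succ]

lemma list_prod_mem_extPow (k : ℕ) (l : List V) (hl : l.length = k) :
    (l.map ⇑(ExteriorAlgebra.ι 𝕜 (M := V))).prod ∈ extPow 𝕜 V k := by
  apply Submodule.subset_span
  refine ⟨fun i => l.get (Fin.cast hl.symm i), ?_⟩
  have : List.ofFn (fun i : Fin k => l.get (Fin.cast hl.symm i)) = l := by
    apply List.ext_get (by simp [hl])
    intro n h1 h2
    simp
  rw [wedgeList, this]

lemma wedgeList_mem (k : ℕ) (w : Fin k → V) : wedgeList 𝕜 V w ∈ extPow 𝕜 V k :=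
  Submodule.subset_span ⟨w, rfl⟩

lemma wedgeListOmit_mem (k : ℕ) (w : Fin (k + 1) → V) (j : Fin (k + 1)) :
    wedgeListOmit 𝕜 V w j ∈ extPow 𝕜 V k := by
  apply list_prod_mem_extPow
  have hj := j.isLt
  simp [List.length_eraseIdx, hj]

end Aux


/-- Let `u : V → 𝕜` be a linear functional and `v ∈ V` with
`u(v) ≠ 0`.  Let `d` be the interior product with `u` (determined by
`d(v₁∧⋯∧v_k) = Σᵢ (−1)^{i+1} u(vᵢ)·v₁∧⋯∧v̂ᵢ∧⋯∧v_k`, i.e. with `0`-based signs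
`(−1)^{j}`), and let `s` be the exterior product with `v`.  Then
`d∘s + s∘d = u(v)·id` on every `Λ^k(V)`, and consequently both complexes
`0 ← 𝕜 ← V ← Λ²(V) ← ⋯` (differential `d`) and `0 → 𝕜 → V → Λ²(V) → ⋯`
(differential `s`) are exact in every degree. -/
theorem interior_exterior_homotopy_and_exactness
    (𝕜 : Type*) [Field 𝕜] (V : Type*) [AddCommGroup V] [Module 𝕜 V]
    (u : V →ₗ[𝕜] 𝕜) (v : V) (huv : u v ≠ 0)
    (dM sM : ExteriorAlgebra 𝕜 V →ₗ[𝕜] ExteriorAlgebra 𝕜 V)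
    (hd : ∀ (m : ℕ) (w : Fin m → V),
      dM (wedgeList 𝕜 V w)
        = ∑ j : Fin m, ((-1 : 𝕜) ^ (j : ℕ) * u (w j)) • wedgeListOmit 𝕜 V w j)
    (hs : ∀ x : ExteriorAlgebra 𝕜 V, sM x = ExteriorAlgebra.ι 𝕜 v * x) :
    -- the homotopy identity on every Λ^k(V)
    (∀ k : ℕ, ∀ x ∈ extPow 𝕜 V k, dM (sM x) + sM (dM x) = u v • x) ∧
    -- the complex with differential d is exact in every degree
    (∀ k : ℕ, ∀ x ∈ extPow 𝕜 V k, dM x = 0 → ∃ y ∈ extPow 𝕜 V (k + 1), dM y = x) ∧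
    -- the complex with differential s is exact in every degree
    (∀ x ∈ extPow 𝕜 V 0, sM x = 0 → x = 0) ∧
    (∀ k : ℕ, ∀ x ∈ extPow 𝕜 V (k + 1), sM x = 0 → ∃ y ∈ extPow 𝕜 V k, sM y = x) := by
  -- sM maps extPow k into extPow (k+1)
  have hsmem : ∀ k : ℕ, ∀ x ∈ extPow 𝕜 V k, sM x ∈ extPow 𝕜 V (k + 1) := by
    intro k x hx
    induction hx using Submodule.span_induction with
    | mem x hx =>
      obtain ⟨w, rfl⟩ := hx
      rw [hs, ← wedgeList_cons]
      exact wedgeList_mem _ _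
    | zero => simp
    | add x y hx hy ihx ihy => rw [map_add]; exact Submodule.add_mem _ ihx ihy
    | smul a x hx ihx => rw [map_smul]; exact Submodule.smul_mem _ _ ihx
  -- dM maps extPow (k+1) into extPow k
  have hdmem : ∀ k : ℕ, ∀ x ∈ extPow 𝕜 V (k + 1), dM x ∈ extPow 𝕜 V k := by
    intro k x hx
    induction hx using Submodule.span_induction with
    | mem x hx =>
      obtain ⟨w, rfl⟩ := hx
      rw [hd]
      exact Submodule.sum_mem _ fun j _ => Submodule.smul_mem _ _ (wedgeListOmit_mem _ _ _)
    | zero => simp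
    | add x y hx hy ihx ihy => rw [map_add]; exact Submodule.add_mem _ ihx ihy
    | smul a x hx ihx => rw [map_smul]; exact Submodule.smul_mem _ _ ihx
  -- the homotopy identity
  have hom : ∀ k : ℕ, ∀ x ∈ extPow 𝕜 V k, dM (sM x) + sM (dM x) = u v • x := by
    intro k x hx
    induction hx using Submodule.span_induction with
    | mem x hx =>
      obtain ⟨w, rfl⟩ := hx
      rw [hs (wedgeList 𝕜 V w), ← wedgeList_cons, hd, hd, Fin.sum_univ_succ,
        Fin.cons_zero, wedgeListOmit_cons_zero, map_sum]
      have h1 : ∀ j : Fin k,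
          sM (((-1 : 𝕜) ^ (j : ℕ) * u (w j)) • wedgeListOmit 𝕜 V w j)
            = ((-1 : 𝕜) ^ (j : ℕ) * u (w j)) • (ExteriorAlgebra.ι 𝕜 v * wedgeListOmit 𝕜 V w j) := by
        intro j
        rw [map_smul, hs]
      have h2 : ∀ j : Fin k,
          ((-1 : 𝕜) ^ ((j.succ : Fin (k+1)) : ℕ) * u ((Fin.cons v w : Fin (k+1) → V) j.succ)) •
              wedgeListOmit 𝕜 V (Fin.cons v w) j.succ
            = -(((-1 : 𝕜) ^ (j : ℕ) * u (w j)) • (ExteriorAlgebra.ι 𝕜 v * wedgeListOmit 𝕜 V w j)) := by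
        intro j
        rw [wedgeListOmit_cons_succ, Fin.cons_succ, Fin.val_succ, pow_succ, ← neg_smul]
        try (congr 1; ring)
      simp only [h1, h2]
      rw [Finset.sum_neg_distrib]
      simp [mul_comm]
    | zero => simp
    | add x y hx hy ihx ihy => rw [map_add, map_add, map_add, map_add, smul_add]; abel_nf; rw [← ihx, ← ihy]; abel
    | smul a x hx ihx =>
      rw [map_smul, map_smul, map_smul, map_smul, ← smul_add, ihx, smul_comm]
  refine ⟨hom, ?_, ?_, ?_⟩
  · intro k x hx hdx
    refine ⟨(u v)⁻¹ • sM x, Submodule.smul_mem _ _ (hsmem k x hx), ?_⟩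
    rw [map_smul]
    have := hom k x hx
    rw [hdx, map_zero, add_zero] at this
    rw [this, smul_smul, inv_mul_cancel₀ huv, one_smul]
  · intro x hx hsx
    have hdx : dM x = 0 := by
      clear hsx
      induction hx using Submodule.span_induction with
      | mem x hx => obtain ⟨w, rfl⟩ := hx; rw [hd]; simp
      | zero => simp
      | add x y hx hy ihx ihy => rw [map_add, ihx, ihy, add_zero]
      | smul a x hx ihx => rw [map_smul, ihx, smul_zero]
    have := hom 0 x hx
    rw [hsx, hdx, map_zero, map_zero, add_zero] at this
    have h0 : u v • x = 0 := this.symm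
    rcases smul_eq_zero.mp h0 with h | h
    · exact absurd h huv
    · exact h
  · intro k x hx hsx
    refine ⟨(u v)⁻¹ • dM x, Submodule.smul_mem _ _ (hdmem k x hx), ?_⟩
    rw [map_smul]
    have := hom (k + 1) x hx
    rw [hsx, map_zero, zero_add] at this
    rw [this, smul_smul, inv_mul_cancel₀ huv, one_smul]
end

section
/- Let D and E be vector spaces over a field 𝕜 and let i : D → D, j : D → E, k : E → D be linear maps forming an exact couple, i.e., im i = ker j, im j = ker k, and im k = ker i. Set d = j∘k (so d∘d = 0), D' = im i, and E' = ker d / im d. Then: there is a well-defined linear map j' : D' → E' with j'(i(x)) = [j(x)] for all x ∈ D, and a well-defined linear map k' : E' → D' with k'([y]) = k(y) for all y ∈ ker d; and, letting i' : D' → D' be the restriction of i, the derived couple (D', E', i', j', k') is again an exact couple: im i' = ker j', im j' = ker k', and im k' = ker i'. -/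
set_option maxHeartbeats 1000000


/-- Given an exact couple `(D, E, i, j, k)` (so `im i = ker j`,
`im j = ker k`, `im k = ker i`), set `d = j ∘ k`, `D' = im i` and
`E' = ker d / im d`.  Then there are well-defined linear maps `j' : D' → E'` with
`j'(i x) = [j x]` and `k' : E' → D'` with `k'([y]) = k y`, and, `i'` being the
restriction of `i` to `D'`, the derived couple `(D', E', i', j', k')` is again exact. -/
theorem derived_couple_exact
    (𝕜 : Type*) [Field 𝕜] (D E : Type*)
    [AddCommGroup D] [Module 𝕜 D] [AddCommGroup E] [Module 𝕜 E]
    (i : D →ₗ[𝕜] D) (j : D →ₗ[𝕜] E) (k : E →ₗ[𝕜] D)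
    (hij : LinearMap.range i = LinearMap.ker j)
    (hjk : LinearMap.range j = LinearMap.ker k)
    (hki : LinearMap.range k = LinearMap.ker i) :
    ∃ (j' : ↥(LinearMap.range i) →ₗ[𝕜]
        (↥(LinearMap.ker (j ∘ₗ k)) ⧸
          Submodule.comap (LinearMap.ker (j ∘ₗ k)).subtype (LinearMap.range (j ∘ₗ k))))
      (k' : (↥(LinearMap.ker (j ∘ₗ k)) ⧸
          Submodule.comap (LinearMap.ker (j ∘ₗ k)).subtype (LinearMap.range (j ∘ₗ k)))
        →ₗ[𝕜] ↥(LinearMap.range i)),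
      -- j' (i x) = [j x]
      (∀ x : D,
        j' (i.rangeRestrict x) =
          Submodule.Quotient.mk
            (LinearMap.codRestrict (LinearMap.ker (j ∘ₗ k)) j
              (fun x => by
                have h0 : k (j x) = 0 := by
                  rw [← LinearMap.mem_ker, ← hjk]
                  exact LinearMap.mem_range_self j x
                simp [LinearMap.mem_ker, LinearMap.comp_apply, h0]) x)) ∧
      -- k' [y] = k y
      (∀ y : ↥(LinearMap.ker (j ∘ₗ k)),
        k' (Submodule.Quotient.mk y) =
          LinearMap.codRestrict (LinearMap.range i)
            (k ∘ₗ (LinearMap.ker (j ∘ₗ k)).subtype)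
            (fun y => by
              rw [hij, LinearMap.mem_ker]
              exact LinearMap.mem_ker.mp y.2) y) ∧
      -- exactness of the derived couple
      LinearMap.range (i.restrict (p := LinearMap.range i) (q := LinearMap.range i)
          (fun x _ => LinearMap.mem_range_self i x)) = LinearMap.ker j' ∧
      LinearMap.range j' = LinearMap.ker k' ∧
      LinearMap.range k' = LinearMap.ker (i.restrict (p := LinearMap.range i)
          (q := LinearMap.range i) (fun x _ => LinearMap.mem_range_self i x)) := by
  classical
  have hkj : ∀ x, k (j x) = 0 := fun x => by
    have : j x ∈ LinearMap.ker k := by rw [← hjk]; exact LinearMap.mem_range_self j x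
    exact this
  have hik : ∀ y, i (k y) = 0 := fun y => by
    have : k y ∈ LinearMap.ker i := by rw [← hki]; exact LinearMap.mem_range_self k y
    exact this
  have hji : ∀ x, j (i x) = 0 := fun x => by
    have : i x ∈ LinearMap.ker j := by rw [← hij]; exact LinearMap.mem_range_self i x
    exact this
  set N := Submodule.comap (LinearMap.ker (j ∘ₗ k)).subtype (LinearMap.range (j ∘ₗ k)) with hN
  have hjmem : ∀ x : D, j x ∈ LinearMap.ker (j ∘ₗ k) := fun x => by
    simp [LinearMap.mem_ker, LinearMap.comp_apply, hkj]
  set jt : D →ₗ[𝕜] ↥(LinearMap.ker (j ∘ₗ k)) :=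
    LinearMap.codRestrict _ j hjmem with hjt
  set J : D →ₗ[𝕜] (↥(LinearMap.ker (j ∘ₗ k)) ⧸ N) := N.mkQ.comp jt with hJ
  have hJker : LinearMap.ker i ≤ LinearMap.ker J := by
    intro x hx
    have hx' : x ∈ LinearMap.range k := by rw [hki]; exact hx
    obtain ⟨z, rfl⟩ := hx'
    simp only [LinearMap.mem_ker, hJ, LinearMap.comp_apply, Submodule.mkQ_apply]
    rw [Submodule.Quotient.mk_eq_zero]
    exact ⟨z, rfl⟩
  set i' := (i.restrict (p := LinearMap.range i) (q := LinearMap.range i)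
      (fun x _ => LinearMap.mem_range_self i x)) with hi'
  set j' : ↥(LinearMap.range i) →ₗ[𝕜] (↥(LinearMap.ker (j ∘ₗ k)) ⧸ N) :=
    (Submodule.liftQ (LinearMap.ker i) J hJker).comp
      (i.quotKerEquivRange.symm : ↥(LinearMap.range i) →ₗ[𝕜] D ⧸ LinearMap.ker i) with hj'
  have hj'apply : ∀ x : D, j' (i.rangeRestrict x) = Submodule.Quotient.mk (jt x) := by
    intro x
    have h1 : i.quotKerEquivRange.symm (i.rangeRestrict x)
        = Submodule.Quotient.mk x := i.quotKerEquivRange_symm_apply_image x _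
    simp only [hj', LinearMap.comp_apply, LinearEquiv.coe_coe, h1, Submodule.liftQ_apply, hJ,
      Submodule.mkQ_apply]
  have hkmem : ∀ y : ↥(LinearMap.ker (j ∘ₗ k)),
      (k ∘ₗ (LinearMap.ker (j ∘ₗ k)).subtype) y ∈ LinearMap.range i := fun y => by
    rw [hij, LinearMap.mem_ker]
    exact LinearMap.mem_ker.mp y.2
  set kt : ↥(LinearMap.ker (j ∘ₗ k)) →ₗ[𝕜] ↥(LinearMap.range i) :=
    LinearMap.codRestrict (LinearMap.range i) (k ∘ₗ (LinearMap.ker (j ∘ₗ k)).subtype) hkmem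
    with hkt
  have hktker : N ≤ LinearMap.ker kt := by
    rintro y hy
    obtain ⟨z, hz⟩ := hy
    have : k (y : E) = 0 := by
      have : (y : E) = j (k z) := hz.symm
      rw [this, hkj]
    simp only [LinearMap.mem_ker, hkt]
    apply Subtype.ext
    simpa [LinearMap.codRestrict, LinearMap.comp_apply] using this
  set k' : (↥(LinearMap.ker (j ∘ₗ k)) ⧸ N) →ₗ[𝕜] ↥(LinearMap.range i) :=
    Submodule.liftQ N kt hktker with hk'
  have hk'apply : ∀ y : ↥(LinearMap.ker (j ∘ₗ k)),
      k' (Submodule.Quotient.mk y) = kt y := fun y => Submodule.liftQ_apply N kt y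
  refine ⟨j', k', ?_, ?_, ?_, ?_, ?_⟩
  · intro x
    exact hj'apply x
  · intro y
    exact hk'apply y
  · -- range i' = ker j'
    apply le_antisymm
    · rintro _ ⟨⟨y, hy⟩, rfl⟩
      obtain ⟨x, rfl⟩ := hy
      have heq : i' ⟨i x, ⟨x, rfl⟩⟩ = i.rangeRestrict (i x) := by
        apply Subtype.ext
        rfl
      rw [LinearMap.mem_ker, heq, hj'apply]
      rw [Submodule.Quotient.mk_eq_zero]
      have : jt (i x) = 0 := by
        apply Subtype.ext
        simpa [hjt, LinearMap.codRestrict] using hji x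
      rw [this]
      exact N.zero_mem
    · rintro ⟨y, hy⟩ hz
      obtain ⟨x, rfl⟩ := hy
      rw [LinearMap.mem_ker] at hz
      have hz' : j' (i.rangeRestrict x) = 0 := by
        have : i.rangeRestrict x = ⟨i x, ⟨x, rfl⟩⟩ := rfl
        rw [this]; exact hz
      rw [hj'apply, Submodule.Quotient.mk_eq_zero] at hz'
      obtain ⟨z, hzz⟩ := hz'
      have hzz' : j (k z) = j x := hzz
      have hsub : x - k z ∈ LinearMap.ker j := by
        rw [LinearMap.mem_ker, map_sub, hzz', sub_self]
      rw [← hij] at hsub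
      obtain ⟨w, hw⟩ := hsub
      refine ⟨i.rangeRestrict w, ?_⟩
      apply Subtype.ext
      have : i (i w) = i x := by
        rw [hw, map_sub, hik, sub_zero]
      simpa [hi', LinearMap.restrict_apply] using this
  · -- range j' = ker k'
    apply le_antisymm
    · rintro _ ⟨⟨y, hy⟩, rfl⟩
      obtain ⟨x, rfl⟩ := hy
      have heq : (⟨i x, ⟨x, rfl⟩⟩ : ↥(LinearMap.range i)) = i.rangeRestrict x := rfl
      rw [LinearMap.mem_ker, heq, hj'apply, hk'apply]
      apply Subtype.ext
      simpa [hkt, LinearMap.codRestrict, LinearMap.comp_apply, hjt] using hkj x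
    · intro q hq
      obtain ⟨y, rfl⟩ := Submodule.Quotient.mk_surjective N q
      rw [LinearMap.mem_ker, hk'apply] at hq
      have hky : k (y : E) = 0 := by
        have := congrArg Subtype.val hq
        simpa [hkt, LinearMap.codRestrict, LinearMap.comp_apply] using this
      have : (y : E) ∈ LinearMap.range j := by rw [hjk]; exact hky
      obtain ⟨x, hx⟩ := this
      refine ⟨i.rangeRestrict x, ?_⟩
      rw [hj'apply]
      have hxy : jt x = y := Subtype.ext hx
      rw [hxy]
  · -- range k' = ker i'
    apply le_antisymm
    · rintro _ ⟨q, rfl⟩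
      obtain ⟨y, rfl⟩ := Submodule.Quotient.mk_surjective N q
      rw [LinearMap.mem_ker, hk'apply]
      apply Subtype.ext
      simp only [hi', LinearMap.restrict_apply]
      simpa [hkt, LinearMap.codRestrict, LinearMap.comp_apply] using hik (y : E)
    · rintro ⟨y, hy⟩ hz
      rw [LinearMap.mem_ker] at hz
      have hiy : i y = 0 := congrArg Subtype.val hz
      have : y ∈ LinearMap.range k := by rw [hki]; exact hiy
      obtain ⟨w, hw⟩ := this
      have hwd : w ∈ LinearMap.ker (j ∘ₗ k) := by
        have : j y = 0 := by
          have : y ∈ LinearMap.ker j := by rw [← hij]; exact hy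
          exact this
        simpa [LinearMap.mem_ker, LinearMap.comp_apply, hw] using this
      refine ⟨Submodule.Quotient.mk (⟨w, hwd⟩ : ↥(LinearMap.ker (j ∘ₗ k))), ?_⟩
      rw [hk'apply]
      apply Subtype.ext
      simpa [hkt, LinearMap.codRestrict, LinearMap.comp_apply] using hw
end
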